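/- arXiv:0904.3169 — 7 statements merged into one kernel-verified Lean document; each statement's English description precedes it below -/
import Mathlib

section
/- Let M ∈ {0,1}^{m×n} be a 0/1 matrix with row sums r_i and column sums s_j, let I be a set of rows and J a set of columns. If ∑_{i∈I} r_i − ∑_{j∉J} s_j = |I|·|J|, then M_{ij} = 1 for every (i,j) ∈ I×J and M_{ij} = 0 for every (i,j) ∈ Ī×J̄ (where Ī, J̄ are the complements of I and J). -/
lemma sum_eq_of_le_of_sum_eq {α : Type*} {s : Finset α} {f : α → ℕ} {c : ℕ}
    (hle : ∀ a ∈ s, f a ≤ c) (h : ∑ a ∈ s, f a = s.card * c) :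
    ∀ a ∈ s, f a = c := by
  by_contra hcon
  push_neg at hcon
  obtain ⟨a, ha, hne⟩ := hcon
  have hlt : f a < c := lt_of_le_of_ne (hle a ha) hne
  have : ∑ a ∈ s, f a < ∑ _a ∈ s, c :=
    Finset.sum_lt_sum hle ⟨a, ha, hlt⟩
  rw [Finset.sum_const, smul_eq_mul] at this
  omega

/-- Ryser's separation lemma. For a 0/1 matrix `M` with row sums `r` and
column sums `s`, if `∑_{i∈I} r_i − ∑_{j∉J} s_j = |I|·|J|`, then `M` equals 1 on all of `I×J`
and 0 on all of `Ī×J̄`. -/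
theorem stmt_1 (m n : ℕ) (M : Fin m → Fin n → Bool)
    (r : Fin m → ℕ) (s : Fin n → ℕ)
    (hr : ∀ i, r i = (Finset.univ.filter (fun j => M i j = true)).card)
    (hs : ∀ j, s j = (Finset.univ.filter (fun i => M i j = true)).card)
    (I : Finset (Fin m)) (J : Finset (Fin n))
    (h : (∑ i ∈ I, (r i : ℤ)) - ∑ j ∈ Jᶜ, (s j : ℤ) = (I.card : ℤ) * J.card) :
    (∀ i ∈ I, ∀ j ∈ J, M i j = true) ∧
      (∀ i ∈ Iᶜ, ∀ j ∈ Jᶜ, M i j = false) := by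
  set f : Fin m → Fin n → ℕ := fun i j => if M i j then 1 else 0 with hf
  have hr' : ∀ i, r i = ∑ j ∈ J, f i j + ∑ j ∈ Jᶜ, f i j := by
    intro i
    rw [hr, Finset.card_filter, ← Finset.sum_add_sum_compl J]
  have hs' : ∀ j, s j = ∑ i ∈ I, f i j + ∑ i ∈ Iᶜ, f i j := by
    intro j
    rw [hs, Finset.card_filter, ← Finset.sum_add_sum_compl I]
  set A : ℕ := ∑ i ∈ I, ∑ j ∈ J, f i j with hA
  set B : ℕ := ∑ i ∈ I, ∑ j ∈ Jᶜ, f i j with hB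
  set C : ℕ := ∑ i ∈ Iᶜ, ∑ j ∈ Jᶜ, f i j with hC
  have h1 : ∑ i ∈ I, r i = A + B := by
    rw [hA, hB, ← Finset.sum_add_distrib]
    exact Finset.sum_congr rfl fun i _ => hr' i
  have h2 : ∑ j ∈ Jᶜ, s j = B + C := by
    rw [hB, hC, Finset.sum_comm (s := I), Finset.sum_comm (s := Iᶜ),
      ← Finset.sum_add_distrib]
    exact Finset.sum_congr rfl fun j _ => hs' j
  rw [← Nat.cast_sum, ← Nat.cast_sum, h1, h2] at h
  have hinner : ∀ i ∈ I, ∑ j ∈ J, f i j ≤ J.card := by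
    intro i _
    calc ∑ j ∈ J, f i j ≤ ∑ _j ∈ J, 1 :=
          Finset.sum_le_sum (fun j _ => by simp [hf]; split <;> omega)
      _ = J.card := by simp
  have hAle : A ≤ I.card * J.card := by
    calc A ≤ ∑ _i ∈ I, J.card := Finset.sum_le_sum hinner
      _ = I.card * J.card := by rw [Finset.sum_const, smul_eq_mul]
  have hAeq : A = I.card * J.card ∧ C = 0 := by
    constructor <;> [skip; skip] <;>
    · push_cast at h
      omega
  constructor
  · intro i hi j hj
    have hrow := sum_eq_of_le_of_sum_eq hinner hAeq.1 i hi
    have hcell := sum_eq_of_le_of_sum_eq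
      (s := J) (f := f i) (c := 1)
      (fun j _ => by simp only [hf]; split <;> omega)
      (by rw [hrow]; ring) j hj
    by_contra hm
    simp only [Bool.not_eq_true] at hm
    simp [hf, hm] at hcell
  · intro i hi j hj
    have hzero : ∑ j ∈ Jᶜ, f i j = 0 := by
      have := Finset.sum_eq_zero_iff.mp hAeq.2 i hi
      exact this
    have := Finset.sum_eq_zero_iff.mp hzero j hj
    by_contra hm
    simp only [Bool.not_eq_false] at hm
    simp [hf, hm] at this
end

section
/- (Ryser's theorem.) Let r ∈ {0,1,…,n}^m be a non-increasing vector and s ∈ {0,1,…,m}^n a vector with ∑_{i=1}^m r_i = ∑_{j=1}^n s_j. Then there exists a matrix M ∈ {0,1}^{m×n} with row sums r and column sums s if and only if r ⪯ s*. -/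
/-- `s` is dominated by `t`: every prefix sum of `s` is at most the corresponding
prefix sum of `t`. -/
def Dominates {n : ℕ} (s t : Fin n → ℕ) : Prop :=
  ∀ ℓ ≤ n, ∑ j ∈ Finset.univ.filter (fun j : Fin n => (j : ℕ) < ℓ), s j ≤
    ∑ j ∈ Finset.univ.filter (fun j : Fin n => (j : ℕ) < ℓ), t j

/-- The conjugate of a vector `s ∈ {0,…,m}^n` is the vector `s* ∈ {0,…,n}^m` with
`s*_i = |{j : s_j ≥ i}|` (here `i : Fin m` stands for the 1-indexed row `i+1`). -/
def conj (m : ℕ) {n : ℕ} (s : Fin n → ℕ) : Fin m → ℕ :=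
  fun i => (Finset.univ.filter (fun j : Fin n => (i : ℕ) + 1 ≤ s j)).card

open Finset

lemma card_filter_lt (M c : ℕ) :
    (univ.filter fun i : Fin M => (i : ℕ) < c).card = min c M := by
  rw [Finset.card_filter]
  rw [Fin.sum_univ_eq_sum_range (fun k => if k < c then (1:ℕ) else 0)]
  rw [← Finset.card_filter]
  have h : (range M).filter (fun i => i < c) = range (min c M) := by
    ext x; simp only [mem_filter, mem_range]; omega
  rw [h, card_range]

lemma prefix_conj {m n ℓ : ℕ} (s : Fin n → ℕ) (hℓ : ℓ ≤ m) :
    ∑ i ∈ univ.filter (fun i : Fin m => (i : ℕ) < ℓ), conj m s i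
      = ∑ j, min (s j) ℓ := by
  have h1 : ∀ i : Fin m, conj m s i = ∑ j : Fin n, if (i : ℕ) + 1 ≤ s j then 1 else 0 :=
    fun i => Finset.card_filter _ _
  simp_rw [h1]
  rw [Finset.sum_comm]
  refine Finset.sum_congr rfl fun j _ => ?_
  rw [show (∑ i ∈ univ.filter (fun i : Fin m => (i : ℕ) < ℓ),
      if (i : ℕ) + 1 ≤ s j then (1:ℕ) else 0)
      = ((univ.filter (fun i : Fin m => (i : ℕ) < ℓ)).filter
          (fun i : Fin m => (i : ℕ) + 1 ≤ s j)).card from (Finset.card_filter _ _).symm]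
  rw [Finset.filter_filter]
  have h2 : (univ.filter fun i : Fin m => (i : ℕ) < ℓ ∧ (i : ℕ) + 1 ≤ s j)
      = univ.filter fun i : Fin m => (i : ℕ) < min ℓ (s j) := by
    apply Finset.filter_congr; intro i _; simp
  rw [h2, card_filter_lt]
  omega

lemma choose_top {n : ℕ} (s : Fin n → ℕ) :
    ∀ k, k ≤ n → ∃ C : Finset (Fin n), C.card = k ∧
      ∀ j ∈ C, ∀ j' ∉ C, s j' ≤ s j := by
  intro k
  induction k with
  | zero => exact fun _ => ⟨∅, rfl, by simp⟩
  | succ k ih =>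
    intro hk
    obtain ⟨C, hCc, hCt⟩ := ih (Nat.le_of_succ_le hk)
    have hne : (Cᶜ : Finset (Fin n)).Nonempty := by
      rw [← Finset.card_pos, Finset.card_compl, hCc]
      simp only [Fintype.card_fin]; omega
    obtain ⟨j0, hj0mem, hj0max⟩ := Finset.exists_max_image _ s hne
    have hj0C : j0 ∉ C := by simpa using hj0mem
    refine ⟨insert j0 C, ?_, ?_⟩
    · rw [card_insert_of_notMem hj0C, hCc]
    · intro j hj j' hj'
      have hj'C : j' ∉ C := fun h => hj' (mem_insert_of_mem h)
      rcases mem_insert.mp hj with rfl | hjC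
      · exact hj0max j' (by simpa using hj'C)
      · exact hCt j hjC j' hj'C

lemma prefix_cast {m ℓ : ℕ} (hℓ : ℓ ≤ m) (r : Fin (m + 1) → ℕ) :
    ∑ i ∈ univ.filter (fun i : Fin (m + 1) => (i : ℕ) < ℓ), r i
      = ∑ i ∈ univ.filter (fun i : Fin m => (i : ℕ) < ℓ), r i.castSucc := by
  have h : (univ.filter (fun i : Fin (m + 1) => (i : ℕ) < ℓ))
      = (univ.filter (fun i : Fin m => (i : ℕ) < ℓ)).map Fin.castSuccEmb := by
    ext i
    simp only [mem_filter, mem_univ, true_and, mem_map, Fin.castSuccEmb]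
    constructor
    · intro hi
      exact ⟨⟨(i : ℕ), lt_of_lt_of_le hi hℓ⟩, hi, by ext; simp⟩
    · rintro ⟨a, ha, rfl⟩; simpa using ha
  rw [h, Finset.sum_map]
  rfl

lemma filter_lt_succ {m ℓ : ℕ} (h : ℓ < m) :
    (univ.filter fun i : Fin m => (i : ℕ) < ℓ + 1)
      = insert ⟨ℓ, h⟩ (univ.filter fun i : Fin m => (i : ℕ) < ℓ) := by
  ext i
  simp only [mem_filter, mem_univ, true_and, mem_insert, Fin.ext_iff]
  omega

lemma build : ∀ (m : ℕ) {n : ℕ} (r : Fin m → ℕ) (s : Fin n → ℕ),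
    (∀ i, r i ≤ n) →
    (∀ i i' : Fin m, i ≤ i' → r i' ≤ r i) →
    (∑ i, r i = ∑ j, s j) →
    (∀ ℓ ≤ m, ∑ i ∈ univ.filter (fun i : Fin m => (i : ℕ) < ℓ), r i ≤ ∑ j, min (s j) ℓ) →
    ∃ M : Fin m → Fin n → Bool,
      (∀ i, (univ.filter (fun j => M i j = true)).card = r i) ∧
      (∀ j, (univ.filter (fun i => M i j = true)).card = s j) := by
  intro m
  induction m with
  | zero =>
    intro n r s _ _ hsum _
    have hs0 : ∀ j, s j = 0 := by
      have : ∑ j, s j = 0 := by rw [← hsum]; simp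
      intro j
      exact Finset.sum_eq_zero_iff.mp this j (mem_univ j)
    exact ⟨fun i _ => false, fun i => i.elim0, fun j => by simp [hs0 j]⟩
  | succ m ih =>
    intro n r s hrle hrmono hsum hdom
    obtain ⟨k, hk⟩ : ∃ k, r (Fin.last m) = k := ⟨_, rfl⟩
    obtain ⟨C, hCcard, hCtop⟩ := choose_top s k (hk ▸ hrle (Fin.last m))
    -- every column in C is positive
    have hconj1 : k ≤ (univ.filter fun j : Fin n => 1 ≤ s j).card := by
      have h1 := hdom 1 (by omega)
      have hpre : ∑ i ∈ univ.filter (fun i : Fin (m+1) => (i : ℕ) < 1), r i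
          = r ⟨0, Nat.succ_pos m⟩ := by
        have h0 : (univ.filter fun i : Fin (m+1) => (i : ℕ) < 1)
            = {(⟨0, Nat.succ_pos m⟩ : Fin (m+1))} := by
          ext i; simp only [mem_filter, mem_univ, true_and, mem_singleton, Fin.ext_iff]; omega
        rw [h0, Finset.sum_singleton]
      have hmin : (∑ j, min (s j) 1) = (univ.filter fun j : Fin n => 1 ≤ s j).card := by
        rw [Finset.card_filter]
        refine Finset.sum_congr rfl fun j _ => ?_
        by_cases h : 1 ≤ s j
        · rw [if_pos h]; omega
        · rw [if_neg h]; omega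
      rw [hpre, hmin] at h1
      exact hk ▸ le_trans (hrmono _ _ (Fin.zero_le _)) h1
    have hs1 : ∀ j ∈ C, 1 ≤ s j := by
      intro j hj
      by_contra h
      have hsub : (univ.filter fun j' : Fin n => 1 ≤ s j') ⊆ C.erase j := by
        intro j' hj'
        simp only [mem_filter, mem_univ, true_and] at hj'
        have hj'C : j' ∈ C := by
          by_contra hc
          exact absurd (hCtop j hj j' hc) (by omega)
        exact mem_erase.mpr ⟨fun he => by subst he; omega, hj'C⟩
      have := Finset.card_le_card hsub
      rw [Finset.card_erase_of_mem hj, hCcard] at this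
      have hkpos : 0 < k := hCcard ▸ Finset.card_pos.mpr ⟨j, hj⟩
      omega
    -- sum split for r
    have hrsplit : ∑ i, r i = (∑ i : Fin m, r i.castSucc) + k := by
      rw [← hk]; exact Fin.sum_univ_castSucc r
    -- prefix at m equals the castSucc sum
    have hprem : ∑ i ∈ univ.filter (fun i : Fin (m+1) => (i : ℕ) < m), r i
        = ∑ i : Fin m, r i.castSucc := by
      rw [prefix_cast (le_refl m) r]
      congr 1
      apply Finset.filter_true_of_mem
      intro i _; exact i.isLt
    -- columns outside C have s j ≤ m
    have hsmall : ∀ j ∉ C, s j ≤ m := by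
      intro j hj
      by_contra h
      push_neg at h
      have hCbig : ∀ j' ∈ insert j C, m + 1 ≤ s j' := by
        intro j' hj'
        rcases mem_insert.mp hj' with rfl | hj'C
        · omega
        · exact le_trans h (hCtop j' hj'C j hj)
      -- ∑ min (s j) m + card{j : m+1 ≤ s j} counting
      have hpt : ∀ j', min (s j') m + (if j' ∈ insert j C then 1 else 0) ≤ s j' := by
        intro j'
        by_cases hmem : j' ∈ insert j C
        · rw [if_pos hmem]; have := hCbig j' hmem; omega
        · rw [if_neg hmem]; omega
      have hsumle : (∑ j', min (s j') m) + (k + 1) ≤ ∑ j', s j' := by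
        have h1 : ∑ j', (min (s j') m + (if j' ∈ insert j C then 1 else 0)) ≤ ∑ j', s j' :=
          Finset.sum_le_sum fun j' _ => hpt j'
        rw [Finset.sum_add_distrib] at h1
        have h2 : ∑ j', (if j' ∈ insert j C then (1:ℕ) else 0) = k + 1 := by
          rw [Finset.sum_ite_mem, Finset.univ_inter, Finset.sum_const, smul_eq_mul, mul_one,
            card_insert_of_notMem hj, hCcard]
        omega
      have hd := hdom m (by omega)
      rw [hprem] at hd
      omega
    -- new data
    set s' : Fin n → ℕ := fun j => if j ∈ C then s j - 1 else s j with hs'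
    set r' : Fin m → ℕ := fun i => r i.castSucc with hr'
    have hs'sum : (∑ j, s' j) + k = ∑ j, s j := by
      have : ∀ j, s' j + (if j ∈ C then 1 else 0) = s j := by
        intro j
        by_cases hj : j ∈ C
        · have := hs1 j hj
          simp only [hs', if_pos hj]
          omega
        · simp only [hs', if_neg hj]
          omega
      calc (∑ j, s' j) + k
          = ∑ j, (s' j + (if j ∈ C then 1 else 0)) := by
            rw [Finset.sum_add_distrib, Finset.sum_ite_mem, Finset.univ_inter,
              Finset.sum_const, smul_eq_mul, mul_one, hCcard]
        _ = ∑ j, s j := Finset.sum_congr rfl fun j _ => this j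
    have hsum' : ∑ i, r' i = ∑ j, s' j := by
      have h5 : (∑ i, r' i) + k = ∑ j, s j := by
        rw [← hsum, hrsplit]
      omega
    have hdom' : ∀ ℓ ≤ m,
        ∑ i ∈ univ.filter (fun i : Fin m => (i : ℕ) < ℓ), r' i ≤ ∑ j, min (s' j) ℓ := by
      intro ℓ hℓ
      have hpre := (prefix_cast hℓ r).symm
      simp only [hr']
      rw [hpre]
      by_cases hcase : ∀ j ∈ C, ℓ + 1 ≤ s j
      · have heq : ∑ j, min (s' j) ℓ = ∑ j, min (s j) ℓ := by
          refine Finset.sum_congr rfl fun j _ => ?_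
          by_cases hj : j ∈ C
          · have := hcase j hj
            simp only [hs', if_pos hj]
            omega
          · simp only [hs', if_neg hj]
        rw [heq]
        exact hdom ℓ (by omega)
      · push_neg at hcase
        obtain ⟨c, hcC, hcℓ⟩ := hcase
        have houtside : ∀ j ∉ C, s j ≤ ℓ := fun j hj => le_trans (hCtop c hcC j hj) (by omega)
        have hpt : ∀ j, min (s j) (ℓ + 1) ≤ min (s' j) ℓ + (if j ∈ C then 1 else 0) := by
          intro j
          by_cases hj : j ∈ C
          · have := hs1 j hj
            simp only [hs', if_pos hj]
            omega
          · have := houtside j hj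
            simp only [hs', if_neg hj]
            omega
        have hsum2 : (∑ j, min (s j) (ℓ + 1)) ≤ (∑ j, min (s' j) ℓ) + k := by
          have h1 : ∑ j, min (s j) (ℓ+1) ≤ ∑ j, (min (s' j) ℓ + (if j ∈ C then 1 else 0)) :=
            Finset.sum_le_sum fun j _ => hpt j
          rw [Finset.sum_add_distrib, Finset.sum_ite_mem, Finset.univ_inter,
            Finset.sum_const, smul_eq_mul, mul_one, hCcard] at h1
          exact h1
        have hd := hdom (ℓ + 1) (by omega)
        have hℓlt : ℓ < m + 1 := by omega
        rw [filter_lt_succ hℓlt, Finset.sum_insert (by simp)] at hd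
        have hrℓ : k ≤ r ⟨ℓ, hℓlt⟩ := hk ▸ hrmono _ _ (Fin.le_last _)
        omega
    obtain ⟨M', hrow', hcol'⟩ := ih r' s' (fun i => hrle _) 
      (fun i i' hle => hrmono _ _ (by simpa using hle)) hsum' hdom'
    refine ⟨fun i j => Fin.lastCases (motive := fun _ => Bool) (decide (j ∈ C))
      (fun i' => M' i' j) i, ?_, ?_⟩
    · intro i
      induction i using Fin.lastCases with
      | last =>
        simp only [Fin.lastCases_last]
        rw [hk, ← hCcard]
        congr 1
        ext j; simp
      | cast i =>
        simp only [Fin.lastCases_castSucc]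
        exact hrow' i
    · intro j
      rw [Finset.card_filter, Fin.sum_univ_castSucc]
      simp only [Fin.lastCases_castSucc, Fin.lastCases_last]
      rw [← Finset.card_filter]
      have hcol := hcol' j
      by_cases hj : j ∈ C
      · have := hs1 j hj
        simp only [hs', if_pos hj] at hcol
        simp only [hj, decide_true, if_true]
        omega
      · simp only [hs', if_neg hj] at hcol
        simp only [hj, decide_false, Bool.false_eq_true, if_false]
        omega

/-- Ryser's theorem. For a non-increasing `r ∈ {0,…,n}^m` and
`s ∈ {0,…,m}^n` with `∑ r = ∑ s`, there is a 0/1 matrix with row sums `r` and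
column sums `s` if and only if `r ⪯ s*`. -/
theorem stmt_7 (m n : ℕ) (r : Fin m → ℕ) (s : Fin n → ℕ)
    (hrle : ∀ i, r i ≤ n) (hsle : ∀ j, s j ≤ m)
    (hrmono : ∀ i i' : Fin m, i ≤ i' → r i' ≤ r i)
    (hsum : ∑ i, r i = ∑ j, s j) :
    (∃ M : Fin m → Fin n → Bool,
      (∀ i, (Finset.univ.filter (fun j => M i j = true)).card = r i) ∧
      (∀ j, (Finset.univ.filter (fun i => M i j = true)).card = s j)) ↔
    Dominates r (conj m s) := by
  constructor
  · rintro ⟨M, hrow, hcol⟩ ℓ hℓ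
    rw [prefix_conj s hℓ]
    have hri : ∀ i : Fin m, r i = ∑ j : Fin n, if M i j = true then 1 else 0 :=
      fun i => (hrow i).symm.trans (Finset.card_filter _ _)
    calc ∑ i ∈ univ.filter (fun i : Fin m => (i : ℕ) < ℓ), r i
        = ∑ i ∈ univ.filter (fun i : Fin m => (i : ℕ) < ℓ),
            ∑ j : Fin n, if M i j = true then 1 else 0 :=
          Finset.sum_congr rfl fun i _ => hri i
      _ = ∑ j : Fin n, ∑ i ∈ univ.filter (fun i : Fin m => (i : ℕ) < ℓ),
            (if M i j = true then 1 else 0) := Finset.sum_comm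
      _ ≤ ∑ j : Fin n, min (s j) ℓ := by
          refine Finset.sum_le_sum fun j _ => ?_
          rw [← Finset.card_filter]
          refine le_min ?_ ?_
          · rw [← hcol j]
            apply Finset.card_le_card
            intro i hi
            simp only [mem_filter, mem_univ, true_and] at hi ⊢
            exact hi.2
          · calc ((univ.filter (fun i : Fin m => (i : ℕ) < ℓ)).filter
                (fun i => M i j = true)).card
                ≤ (univ.filter (fun i : Fin m => (i : ℕ) < ℓ)).card :=
                  Finset.card_le_card (Finset.filter_subset _ _)
              _ ≤ ℓ := by rw [card_filter_lt]; omega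
  · intro hdom
    refine build m r s hrle hrmono hsum fun ℓ hℓ => ?_
    have h := hdom ℓ hℓ
    rwa [prefix_conj s hℓ] at h
end

section
/- Let s ∈ {0,1,…,m}^n and let M ∈ {0,1}^{m×n} be any matrix whose row sums equal the conjugate s* and whose column sums equal s. Then M is uniquely determined: M_{ij} = 1 if and only if i ≤ s_j (i.e., in every column j, exactly the first s_j cells are 1). -/
/-- If a 0/1 matrix `M` has row sums `s*` and column sums `s`, then `M`
is uniquely determined: `M_{ij} = 1` iff `i ≤ s_j` (1-indexed), i.e. in every column `j`
exactly the first `s_j` cells are 1.  (Here rows are 0-indexed, so the condition reads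
`i + 1 ≤ s j`.) -/
theorem stmt_8 (m n : ℕ) (s : Fin n → ℕ) (hle : ∀ j, s j ≤ m)
    (M : Fin m → Fin n → Bool)
    (hrow : ∀ i, (Finset.univ.filter (fun j => M i j = true)).card = conj m s i)
    (hcol : ∀ j, (Finset.univ.filter (fun i => M i j = true)).card = s j) :
    ∀ (i : Fin m) (j : Fin n), M i j = true ↔ (i : ℕ) + 1 ≤ s j := by
  have key : ∀ k, ∀ (hk : k < m) (j : Fin n), M ⟨k, hk⟩ j = true ↔ k + 1 ≤ s j := by
    intro k
    induction k using Nat.strong_induction_on with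
    | _ k IH =>
      intro hk j
      -- Step 1: every 1 in row k lies in a column with s j' ≥ k+1.
      have hsub : ∀ j', M ⟨k, hk⟩ j' = true → k + 1 ≤ s j' := by
        intro j' hM
        by_contra hcon
        have hsk : s j' ≤ k := by omega
        have hskm : s j' < m := lt_of_le_of_lt hsk hk
        have hsubset : insert (⟨k, hk⟩ : Fin m) (Finset.Iio (⟨s j', hskm⟩ : Fin m)) ⊆
            Finset.univ.filter (fun i => M i j' = true) := by
          intro i hi
          simp only [Finset.mem_insert, Finset.mem_Iio, Finset.mem_filter, Finset.mem_univ,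
            true_and, Fin.lt_def] at hi ⊢
          rcases hi with rfl | hi
          · exact hM
          · have hiv : (i : ℕ) < s j' := hi
            have := (IH (i : ℕ) (by omega) i.isLt j').mpr (by omega)
            simpa using this
        have hcard := Finset.card_le_card hsubset
        rw [hcol j', Finset.card_insert_of_notMem (by
          simp only [Finset.mem_Iio, Fin.mk_lt_mk]
          omega), Fin.card_Iio] at hcard
        simp only [Fin.val_mk] at hcard
        omega
      -- Step 2: equal cardinalities force equality of the two column sets.
      have hA : (Finset.univ.filter (fun j' => M ⟨k, hk⟩ j' = true)) ⊆
          (Finset.univ.filter (fun j' : Fin n => k + 1 ≤ s j')) := by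
        intro j' hj'
        simp only [Finset.mem_filter, Finset.mem_univ, true_and] at hj' ⊢
        exact hsub j' hj'
      have hcards : (Finset.univ.filter (fun j' : Fin n => k + 1 ≤ s j')).card ≤
          (Finset.univ.filter (fun j' => M ⟨k, hk⟩ j' = true)).card := by
        rw [hrow ⟨k, hk⟩]; rfl
      have heq := Finset.eq_of_subset_of_card_le hA hcards
      constructor
      · intro hM; exact hsub j hM
      · intro hs
        have : j ∈ (Finset.univ.filter (fun j' : Fin n => k + 1 ≤ s j')) := by
          simp; omega
        rw [← heq] at this
        simpa using this
  intro i j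
  have := key (i : ℕ) i.isLt j
  simpa using this
end

section
/- If the gadget instance is feasible, i.e., there exists a matrix M ∈ {R,G,Y}^{n×(2n+2)} such that for each color c ∈ {R,G,Y} row i contains exactly r^c_i entries equal to c and column q contains exactly s^c_q entries equal to c, then α ⪯ β in the dominance order. -/
/-! The gadget instance of the 3-color tomography problem on an `n × (2n+2)` grid.
Rows `1,…,n` and columns `1,…,2n+2` are 1-indexed.  Colors are encoded as elements of
`Fin 3`: `0 = R` (red), `1 = G` (green), `2 = Y` (yellow). -/

/-- Red row projections: `r^R_i = i+1` if `i ∈ {u,v}` and `i` otherwise. -/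
def gadgetRR (u v i : ℕ) : ℕ := if i = u ∨ i = v then i + 1 else i

/-- Green row projections: `r^G_i = i` if `i ∈ {u,v}` and `i+1` otherwise. -/
def gadgetRG (u v i : ℕ) : ℕ := if i = u ∨ i = v then i else i + 1

/-- Yellow row projections: `r^Y_i = 2n+2 − r^R_i − r^G_i`. -/
def gadgetRY (n u v i : ℕ) : ℕ := 2 * n + 2 - gadgetRR u v i - gadgetRG u v i

/-- Red column projections: `s^R_j = n−j+α_j` for `1 ≤ j ≤ n`, `s^R_{n+1} = 1`,
`s^R_{n+2} = n−k+1`, `s^R_{n+2+j} = 0` for `1 ≤ j ≤ n`. -/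
def gadgetSR (n k : ℕ) (α : ℕ → ℕ) (q : ℕ) : ℕ :=
  if q ≤ n then n - q + α q
  else if q = n + 1 then 1
  else if q = n + 2 then n - k + 1
  else 0

/-- Green column projections: `s^G_j = 0` for `1 ≤ j ≤ n`, `s^G_{n+1} = n−1`,
`s^G_{n+2} = k−1`, `s^G_{n+2+j} = n−j+1−β_j` for `1 ≤ j ≤ n`. -/
def gadgetSG (n k : ℕ) (β : ℕ → ℕ) (q : ℕ) : ℕ :=
  if q ≤ n then 0
  else if q = n + 1 then n - 1
  else if q = n + 2 then k - 1
  else n - (q - (n + 2)) + 1 - β (q - (n + 2))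

/-- Yellow column projections: `s^Y_q = n − s^R_q − s^G_q`. -/
def gadgetSY (n k : ℕ) (α β : ℕ → ℕ) (q : ℕ) : ℕ :=
  n - gadgetSR n k α q - gadgetSG n k β q

/-- Feasibility of the gadget instance: there is a coloring `M` of the `n × (2n+2)` grid
with colors `{R,G,Y}` realizing all prescribed row and column color counts. -/
def GadgetFeasible (n k u v : ℕ) (α β : ℕ → ℕ) : Prop :=
  ∃ M : ℕ → ℕ → Fin 3,
    (∀ i, 1 ≤ i → i ≤ n →
      ((Finset.Icc 1 (2 * n + 2)).filter (fun q => M i q = 0)).card = gadgetRR u v i ∧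
      ((Finset.Icc 1 (2 * n + 2)).filter (fun q => M i q = 1)).card = gadgetRG u v i ∧
      ((Finset.Icc 1 (2 * n + 2)).filter (fun q => M i q = 2)).card = gadgetRY n u v i) ∧
    (∀ q, 1 ≤ q → q ≤ 2 * n + 2 →
      ((Finset.Icc 1 n).filter (fun i => M i q = 0)).card = gadgetSR n k α q ∧
      ((Finset.Icc 1 n).filter (fun i => M i q = 1)).card = gadgetSG n k β q ∧
      ((Finset.Icc 1 n).filter (fun i => M i q = 2)).card = gadgetSY n k α β q)

lemma fin3_ne_two (x : Fin 3) : ¬ x = 2 ↔ (x = 0 ∨ x = 1) := by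
  fin_cases x <;> decide

lemma sum_Icc_id_gauss (ℓ : ℕ) : 2 * ∑ j ∈ Finset.Icc 1 ℓ, j = ℓ * (ℓ + 1) := by
  induction ℓ with
  | zero => simp
  | succ m ih =>
    rw [Finset.sum_Icc_succ_top (Nat.succ_le_succ (Nat.zero_le m)), Nat.mul_add, ih]
    ring

/-- If the gadget instance is feasible, then `α ⪯ β` in the
dominance order. -/
theorem stmt_10 (n k u v : ℕ) (hk1 : 1 ≤ k) (hkn : k ≤ n)
    (hu : 1 ≤ u) (hun : u ≤ n) (hv : 1 ≤ v) (hvn : v ≤ n) (huv : u ≠ v)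
    (α β : ℕ → ℕ)
    (hα01 : ∀ j, 1 ≤ j → j ≤ n → α j ≤ 1) (hβ01 : ∀ j, 1 ≤ j → j ≤ n → β j ≤ 1)
    (hαk : ∑ j ∈ Finset.Icc 1 n, α j = k) (hβk : ∑ j ∈ Finset.Icc 1 n, β j = k)
    (hfeas : GadgetFeasible n k u v α β) :
    ∀ ℓ, 1 ≤ ℓ → ℓ ≤ n →
      ∑ j ∈ Finset.Icc 1 ℓ, α j ≤ ∑ j ∈ Finset.Icc 1 ℓ, β j := by
  obtain ⟨M, hrow, hcol⟩ := hfeas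
  -- columns n+1 and n+2 contain no yellow
  have hY1 : ∀ i ∈ Finset.Icc 1 n, M i (n+1) ≠ 2 := by
    intro i hi
    have h := (hcol (n+1) (by omega) (by omega)).2.2
    have h0 : gadgetSY n k α β (n+1) = 0 := by
      unfold gadgetSY gadgetSR gadgetSG
      rw [if_neg (show ¬ (n+1 ≤ n) by omega), if_neg (show ¬ (n+1 ≤ n) by omega),
        if_pos rfl, if_pos rfl]
      omega
    rw [h0, Finset.card_eq_zero, Finset.filter_eq_empty_iff] at h
    exact h hi
  have hY2 : ∀ i ∈ Finset.Icc 1 n, M i (n+2) ≠ 2 := by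
    intro i hi
    have h := (hcol (n+2) (by omega) (by omega)).2.2
    have h0 : gadgetSY n k α β (n+2) = 0 := by
      unfold gadgetSY gadgetSR gadgetSG
      rw [if_neg (show ¬ (n+2 ≤ n) by omega), if_neg (show ¬ (n+2 ≤ n) by omega),
        if_neg (show ¬ (n+2 = n+1) by omega), if_neg (show ¬ (n+2 = n+1) by omega),
        if_pos rfl, if_pos rfl]
      omega
    rw [h0, Finset.card_eq_zero, Finset.filter_eq_empty_iff] at h
    exact h hi
  -- each row i has exactly 2i+1 non-yellow cells
  have hrowY : ∀ i ∈ Finset.Icc 1 n,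
      ((Finset.Icc 1 (2*n+2)).filter (fun q => ¬ M i q = 2)).card = 2*i + 1 := by
    intro i hi
    rw [Finset.mem_Icc] at hi
    obtain ⟨h0, h1, _⟩ := hrow i hi.1 hi.2
    have hsplit : (Finset.Icc 1 (2*n+2)).filter (fun q => ¬ M i q = 2)
        = (Finset.Icc 1 (2*n+2)).filter (fun q => M i q = 0)
          ∪ (Finset.Icc 1 (2*n+2)).filter (fun q => M i q = 1) := by
      rw [← Finset.filter_or]
      apply Finset.filter_congr
      intro q _
      exact fin3_ne_two (M i q)
    have hdisj : Disjoint ((Finset.Icc 1 (2*n+2)).filter (fun q => M i q = 0))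
        ((Finset.Icc 1 (2*n+2)).filter (fun q => M i q = 1)) := by
      rw [Finset.disjoint_left]
      intro q hq hq'
      rw [Finset.mem_filter] at hq hq'
      rw [hq.2] at hq'
      exact absurd hq'.2 (by decide)
    rw [hsplit, Finset.card_union_of_disjoint hdisj, h0, h1]
    by_cases h : i = u ∨ i = v <;> simp [gadgetRR, gadgetRG, h] <;> omega
  intro ℓ hℓ1 hℓn
  set C : Finset ℕ := Finset.Icc 1 ℓ ∪ Finset.Icc (n+3) (n+2+ℓ) with hC
  have hdisjC : Disjoint (Finset.Icc 1 ℓ) (Finset.Icc (n+3) (n+2+ℓ)) := by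
    rw [Finset.disjoint_left]
    intro q hq hq'
    rw [Finset.mem_Icc] at hq hq'
    omega
  have hcardC : C.card = 2 * ℓ := by
    rw [hC, Finset.card_union_of_disjoint hdisjC, Nat.card_Icc, Nat.card_Icc]
    omega
  -- per-row lower bound on yellow cells within C
  have hrowC : ∀ i ∈ Finset.Icc 1 ℓ,
      2*ℓ + 1 ≤ (C.filter (fun q => M i q = 2)).card + 2*i := by
    intro i hi
    rw [Finset.mem_Icc] at hi
    have hiN : i ∈ Finset.Icc 1 n := Finset.mem_Icc.mpr ⟨hi.1, le_trans hi.2 hℓn⟩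
    have hab := Finset.card_filter_add_card_filter_not
      (s := C) (p := fun q => M i q = 2)
    rw [hcardC] at hab
    have hsub : C.filter (fun q => ¬ M i q = 2) ∪ {n+1, n+2}
        ⊆ (Finset.Icc 1 (2*n+2)).filter (fun q => ¬ M i q = 2) := by
      intro q hq
      rcases Finset.mem_union.mp hq with hq | hq
      · rw [Finset.mem_filter] at hq ⊢
        refine ⟨?_, hq.2⟩
        have := hq.1
        rw [hC, Finset.mem_union, Finset.mem_Icc, Finset.mem_Icc] at this
        rw [Finset.mem_Icc]
        omega
      · rcases Finset.mem_insert.mp hq with rfl | hq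
        · exact Finset.mem_filter.mpr ⟨Finset.mem_Icc.mpr ⟨by omega, by omega⟩, hY1 i hiN⟩
        · rw [Finset.mem_singleton] at hq
          subst hq
          exact Finset.mem_filter.mpr ⟨Finset.mem_Icc.mpr ⟨by omega, by omega⟩, hY2 i hiN⟩
    have hdisj2 : Disjoint (C.filter (fun q => ¬ M i q = 2)) ({n+1, n+2} : Finset ℕ) := by
      rw [Finset.disjoint_right]
      intro q hq hq'
      rw [Finset.mem_filter, hC, Finset.mem_union, Finset.mem_Icc, Finset.mem_Icc] at hq'
      rw [Finset.mem_insert, Finset.mem_singleton] at hq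
      omega
    have hcard2 : ({n+1, n+2} : Finset ℕ).card = 2 := by
      rw [Finset.card_insert_of_notMem (by simp), Finset.card_singleton]
    have hle := Finset.card_le_card hsub
    rw [Finset.card_union_of_disjoint hdisj2, hcard2, hrowY i hiN] at hle
    omega
  -- yellow counts of the columns of C
  have hcolval1 : ∀ q ∈ Finset.Icc 1 ℓ,
      ((Finset.Icc 1 n).filter (fun i => M i q = 2)).card = q - α q := by
    intro q hq
    rw [Finset.mem_Icc] at hq
    have hqn : q ≤ n := le_trans hq.2 hℓn
    have h := (hcol q hq.1 (by omega)).2.2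
    rw [h]
    have hα := hα01 q hq.1 hqn
    simp only [gadgetSY, gadgetSR, gadgetSG, if_pos hqn]
    omega
  have hcolval2 : ∀ j ∈ Finset.Icc 1 ℓ,
      ((Finset.Icc 1 n).filter (fun i => M i (j + (n+2)) = 2)).card = j - 1 + β j := by
    intro j hj
    rw [Finset.mem_Icc] at hj
    have hjn : j ≤ n := le_trans hj.2 hℓn
    have h := (hcol (j + (n+2)) (by omega) (by omega)).2.2
    rw [h]
    have hβ := hβ01 j hj.1 hjn
    have e1 : ¬ (j + (n+2) ≤ n) := by omega
    have e2 : ¬ (j + (n+2) = n+1) := by omega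
    have e3 : ¬ (j + (n+2) = n+2) := by omega
    simp only [gadgetSY, gadgetSR, gadgetSG, if_neg e1, if_neg e2, if_neg e3]
    have e4 : j + (n+2) - (n+2) = j := by omega
    rw [e4]
    omega
  have hmap : Finset.Icc (n+3) (n+2+ℓ) = (Finset.Icc 1 ℓ).map (addRightEmbedding (n+2)) := by
    rw [Finset.map_add_right_Icc]
    congr 1 <;> omega
  -- total yellow in C, counted by columns
  have hT : ∑ q ∈ C, ((Finset.Icc 1 n).filter (fun i => M i q = 2)).card
      = (∑ q ∈ Finset.Icc 1 ℓ, (q - α q)) + ∑ j ∈ Finset.Icc 1 ℓ, (j - 1 + β j) := by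
    rw [hC, Finset.sum_union hdisjC, hmap, Finset.sum_map]
    congr 1
    · exact Finset.sum_congr rfl hcolval1
    · refine Finset.sum_congr rfl fun j hj => ?_
      simpa [addRightEmbedding_apply] using hcolval2 j hj
  -- double counting
  have hdc : ∑ q ∈ C, ((Finset.Icc 1 n).filter (fun i => M i q = 2)).card
      = ∑ i ∈ Finset.Icc 1 n, (C.filter (fun q => M i q = 2)).card := by
    simp only [Finset.card_filter]
    exact Finset.sum_comm
  -- algebraic bookkeeping
  have hXA : (∑ q ∈ Finset.Icc 1 ℓ, (q - α q)) + ∑ q ∈ Finset.Icc 1 ℓ, α q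
      = ∑ q ∈ Finset.Icc 1 ℓ, q := by
    rw [← Finset.sum_add_distrib]
    refine Finset.sum_congr rfl fun q hq => ?_
    rw [Finset.mem_Icc] at hq
    have := hα01 q hq.1 (le_trans hq.2 hℓn)
    omega
  have hYB : ∑ j ∈ Finset.Icc 1 ℓ, (j - 1 + β j)
      = (∑ j ∈ Finset.Icc 1 ℓ, (j - 1)) + ∑ j ∈ Finset.Icc 1 ℓ, β j :=
    Finset.sum_add_distrib
  have hS0 : (∑ j ∈ Finset.Icc 1 ℓ, (j - 1)) + ℓ = ∑ j ∈ Finset.Icc 1 ℓ, j := by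
    have h : ∑ j ∈ Finset.Icc 1 ℓ, j = ∑ j ∈ Finset.Icc 1 ℓ, ((j - 1) + 1) :=
      Finset.sum_congr rfl fun j hj => by rw [Finset.mem_Icc] at hj; omega
    rw [h, Finset.sum_add_distrib, Finset.sum_const, Nat.card_Icc, smul_eq_mul]
    omega
  have hGauss : 2 * ∑ j ∈ Finset.Icc 1 ℓ, j = ℓ * (ℓ + 1) := sum_Icc_id_gauss ℓ
  -- lower bound on total yellow in C
  have hlower : ℓ * (2*ℓ+1) ≤ (∑ i ∈ Finset.Icc 1 ℓ, (C.filter (fun q => M i q = 2)).card)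
      + 2 * ∑ i ∈ Finset.Icc 1 ℓ, i := by
    have h := Finset.sum_le_sum hrowC
    calc ℓ * (2*ℓ+1) = ∑ _i ∈ Finset.Icc 1 ℓ, (2*ℓ+1) := by
          rw [Finset.sum_const, Nat.card_Icc, smul_eq_mul, Nat.add_sub_cancel]
      _ ≤ ∑ i ∈ Finset.Icc 1 ℓ, ((C.filter (fun q => M i q = 2)).card + 2*i) := h
      _ = _ := by rw [Finset.sum_add_distrib, Finset.mul_sum]
  have hmono : (∑ i ∈ Finset.Icc 1 ℓ, (C.filter (fun q => M i q = 2)).card)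
      ≤ ∑ i ∈ Finset.Icc 1 n, (C.filter (fun q => M i q = 2)).card :=
    Finset.sum_le_sum_of_subset (Finset.Icc_subset_Icc_right hℓn)
  rw [hT] at hdc
  obtain ⟨m, hm⟩ : ∃ m, ℓ * ℓ = m := ⟨_, rfl⟩
  have hsq1 : ℓ * (ℓ + 1) = m + ℓ := by rw [← hm]; ring
  have hsq2 : ℓ * (2*ℓ + 1) = 2 * m + ℓ := by rw [← hm]; ring
  rw [hsq1] at hGauss
  rw [hsq2] at hlower
  omega
end

section
/- Suppose α = β in the gadget instance. Then the gadget instance is feasible (there exists a matrix M ∈ {R,G,Y}^{n×(2n+2)} with the prescribed row and column color counts) if and only if α_u + α_v ≥ 1. -/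
section GadgetAux
open Finset

lemma fin3_cases (x : Fin 3) : x = 0 ∨ x = 1 ∨ x = 2 := by omega

lemma card012 (s : Finset ℕ) (f : ℕ → Fin 3) :
    (s.filter (fun q => f q = 0)).card + (s.filter (fun q => f q = 1)).card
      + (s.filter (fun q => f q = 2)).card = s.card := by
  rw [Finset.card_filter, Finset.card_filter, Finset.card_filter, ← Finset.sum_add_distrib,
    ← Finset.sum_add_distrib]
  rw [Finset.card_eq_sum_ones]
  apply Finset.sum_congr rfl
  intro x _
  rcases fin3_cases (f x) with h | h | h <;> simp [h]

lemma card_split (p : ℕ → Prop) [DecidablePred p] (a b c : ℕ) (h1 : a ≤ b + 1) (h2 : b ≤ c) :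
    ((Icc a c).filter p).card = ((Icc a b).filter p).card + ((Icc (b+1) c).filter p).card := by
  have : Icc a c = Icc a b ∪ Icc (b+1) c := by ext x; simp; omega
  rw [this, filter_union, card_union_of_disjoint]
  exact disjoint_filter_filter (by rw [Finset.disjoint_left]; intro x hx hy; simp at hx hy; omega)

lemma card_single (p : ℕ → Prop) [DecidablePred p] (a : ℕ) :
    ((Icc a a).filter p).card = if p a then 1 else 0 := by
  rw [Icc_self, filter_singleton]; split <;> simp

lemma sum_card_comm (s t : Finset ℕ) (p : ℕ → ℕ → Prop) [∀ i q, Decidable (p i q)] :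
    ∑ i ∈ s, (t.filter (fun q => p i q)).card = ∑ q ∈ t, (s.filter (fun i => p i q)).card := by
  simp only [Finset.card_filter]
  exact Finset.sum_comm

lemma sq_sum (m : ℕ) : ∑ i ∈ Icc 1 m, (2*i - 1) = m * m := by
  induction m with
  | zero => simp
  | succ m ih =>
    rw [Finset.sum_Icc_succ_top (by omega), ih]
    have : 2*(m+1) - 1 = 2*m + 1 := by omega
    rw [this]; ring

lemma sumA' (n m : ℕ) (h : m ≤ n) :
    ∑ j ∈ Icc 1 m, (2*(n-j)+1) + m*m = 2*m*n := by
  induction m with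
  | zero => simp
  | succ m ih =>
    have ih' := ih (by omega)
    rw [Finset.sum_Icc_succ_top (by omega)]
    obtain ⟨d, rfl⟩ : ∃ d, n = m + 1 + d := ⟨n - (m+1), by omega⟩
    have e1 : m + 1 + d - (m+1) = d := by omega
    rw [e1]
    nlinarith [ih']

lemma sumMin (n m : ℕ) (h : m ≤ n) :
    ∑ i ∈ Icc 1 n, min (2*i-1) (2*m) = ∑ j ∈ Icc 1 m, (2*(n-j)+1) := by
  have hsplit : Icc 1 n = Icc 1 m ∪ Icc (m+1) n := by ext x; simp; omega
  have hdisj : Disjoint (Icc 1 m) (Icc (m+1) n) := by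
    rw [Finset.disjoint_left]; intro x hx hy; simp at hx hy; omega
  rw [hsplit, Finset.sum_union hdisj]
  have e1 : ∑ i ∈ Icc 1 m, min (2*i-1) (2*m) = ∑ i ∈ Icc 1 m, (2*i-1) := by
    apply Finset.sum_congr rfl; intro i hi; simp at hi; omega
  have e2 : ∑ i ∈ Icc (m+1) n, min (2*i-1) (2*m) = ∑ i ∈ Icc (m+1) n, 2*m := by
    apply Finset.sum_congr rfl; intro i hi; simp at hi; omega
  rw [e1, e2, sq_sum, Finset.sum_const, Nat.card_Icc]
  have h2 := sumA' n m h
  have e3 : n + 1 - (m+1) = n - m := by omega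
  rw [e3, smul_eq_mul]
  obtain ⟨d, rfl⟩ : ∃ d, n = m + d := ⟨n - m, by omega⟩
  have : m + d - m = d := by omega
  rw [this]
  nlinarith [h2]

lemma forced (n k u v : ℕ) (hk1 : 1 ≤ k) (hkn : k ≤ n)
    (α : ℕ → ℕ) (hα01 : ∀ j, 1 ≤ j → j ≤ n → α j ≤ 1)
    (M : ℕ → ℕ → Fin 3)
    (hrow : ∀ i, 1 ≤ i → i ≤ n →
      ((Finset.Icc 1 (2 * n + 2)).filter (fun q => M i q = 0)).card = gadgetRR u v i ∧
      ((Finset.Icc 1 (2 * n + 2)).filter (fun q => M i q = 1)).card = gadgetRG u v i ∧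
      ((Finset.Icc 1 (2 * n + 2)).filter (fun q => M i q = 2)).card = gadgetRY n u v i)
    (hcol : ∀ q, 1 ≤ q → q ≤ 2 * n + 2 →
      ((Finset.Icc 1 n).filter (fun i => M i q = 0)).card = gadgetSR n k α q ∧
      ((Finset.Icc 1 n).filter (fun i => M i q = 1)).card = gadgetSG n k α q ∧
      ((Finset.Icc 1 n).filter (fun i => M i q = 2)).card = gadgetSY n k α α q)
    (w : ℕ) (hw1 : 1 ≤ w) (hwn : w ≤ n) (hwuv : w = u ∨ w = v) (hαw : α w = 0) :
    M w (n+1) = 0 ∧ M w (n+2) = 0 := by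
  have hn1 : 1 ≤ n := le_trans hk1 hkn
  -- no reds in right block
  have noRedRight : ∀ i, ∀ q : ℕ, n + 3 ≤ q → q ≤ 2*n+2 → 1 ≤ i → i ≤ n → M i q ≠ 0 := by
    intro i q hq1 hq2 hi1 hi2
    have h0 := (hcol q (by omega) (by omega)).1
    have hz : gadgetSR n k α q = 0 := by
      unfold gadgetSR
      rw [if_neg (by omega), if_neg (by omega), if_neg (by omega)]
    rw [hz, Finset.card_eq_zero, Finset.filter_eq_empty_iff] at h0
    exact h0 (by simp; omega)
  have noGreenLeft : ∀ i, ∀ q : ℕ, 1 ≤ q → q ≤ n → 1 ≤ i → i ≤ n → M i q ≠ 1 := by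
    intro i q hq1 hq2 hi1 hi2
    have h0 := (hcol q (by omega) (by omega)).2.1
    have hz : gadgetSG n k α q = 0 := by
      unfold gadgetSG; rw [if_pos (by omega)]
    rw [hz, Finset.card_eq_zero, Finset.filter_eq_empty_iff] at h0
    exact h0 (by simp; omega)
  have noYellowMid : ∀ i, ∀ q : ℕ, n+1 ≤ q → q ≤ n+2 → 1 ≤ i → i ≤ n → M i q ≠ 2 := by
    intro i q hq1 hq2 hi1 hi2
    have h0 := (hcol q (by omega) (by omega)).2.2
    have hz : gadgetSY n k α α q = 0 := by
      rcases (by omega : q = n+1 ∨ q = n+2) with h | h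
      · have hr : gadgetSR n k α q = 1 := by
          unfold gadgetSR; rw [h, if_neg (by omega), if_pos rfl]
        have hg : gadgetSG n k α q = n - 1 := by
          unfold gadgetSG; rw [h, if_neg (by omega), if_pos rfl]
        unfold gadgetSY; rw [hr, hg]; omega
      · have hr : gadgetSR n k α q = n - k + 1 := by
          unfold gadgetSR; rw [h, if_neg (by omega), if_neg (by omega), if_pos rfl]
        have hg : gadgetSG n k α q = k - 1 := by
          unfold gadgetSG; rw [h, if_neg (by omega), if_neg (by omega), if_pos rfl]
        unfold gadgetSY; rw [hr, hg]; omega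
    rw [hz, Finset.card_eq_zero, Finset.filter_eq_empty_iff] at h0
    exact h0 (by simp; omega)
  -- row decompositions
  set ρ : ℕ → ℕ → ℕ := fun i m => ((Icc 1 m).filter (fun q => M i q = 0)).card with hρ
  set γ : ℕ → ℕ → ℕ := fun i m => ((Icc (n+3) (n+2+m)).filter (fun q => M i q = 1)).card with hγ
  set xR : ℕ → ℕ := fun i => (if M i (n+1) = 0 then 1 else 0) + (if M i (n+2) = 0 then 1 else 0) with hxR
  set yG : ℕ → ℕ := fun i => (if M i (n+1) = 1 then 1 else 0) + (if M i (n+2) = 1 then 1 else 0) with hyG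
  have rowRdec : ∀ i, 1 ≤ i → i ≤ n → gadgetRR u v i = ρ i n + xR i := by
    intro i hi1 hi2
    have h0 := (hrow i hi1 hi2).1
    rw [card_split _ 1 n (2*n+2) (by omega) (by omega),
        card_split _ (n+1) (n+1) (2*n+2) (by omega) (by omega),
        card_split _ (n+2) (n+2) (2*n+2) (by omega) (by omega),
        card_single, card_single] at h0
    have hz : ((Icc (n+3) (2*n+2)).filter (fun q => M i q = 0)).card = 0 := by
      rw [Finset.card_eq_zero, Finset.filter_eq_empty_iff]
      intro q hq
      simp at hq
      exact noRedRight i q (by omega) (by omega) hi1 hi2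
    rw [hz] at h0
    rw [← h0, hρ, hxR]
    ring
  have rowGdec : ∀ i, 1 ≤ i → i ≤ n → gadgetRG u v i = γ i n + yG i := by
    intro i hi1 hi2
    have h0 := (hrow i hi1 hi2).2.1
    rw [card_split _ 1 n (2*n+2) (by omega) (by omega),
        card_split _ (n+1) (n+1) (2*n+2) (by omega) (by omega),
        card_split _ (n+2) (n+2) (2*n+2) (by omega) (by omega),
        card_single, card_single] at h0
    have hz : ((Icc 1 n).filter (fun q => M i q = 1)).card = 0 := by
      rw [Finset.card_eq_zero, Finset.filter_eq_empty_iff]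
      intro q hq
      simp at hq
      exact noGreenLeft i q (by omega) (by omega) hi1 hi2
    rw [hz] at h0
    rw [show (2*n+2 : ℕ) = n+2+n from by omega,
       show (n+2+1 : ℕ) = n+3 from by omega] at h0
    simp only [hγ, hyG]
    omega
  have hxy2 : ∀ i, 1 ≤ i → i ≤ n → xR i + yG i = 2 := by
    intro i hi1 hi2
    have h1 := noYellowMid i (n+1) (by omega) (by omega) hi1 hi2
    have h2 := noYellowMid i (n+2) (by omega) (by omega) hi1 hi2
    rw [hxR, hyG]
    rcases fin3_cases (M i (n+1)) with ha | ha | ha <;>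
      rcases fin3_cases (M i (n+2)) with hb | hb | hb <;>
        simp [ha, hb] at h1 h2 ⊢
  have rowSum : ∀ i, 1 ≤ i → i ≤ n → ρ i n + γ i n = 2*i - 1 := by
    intro i hi1 hi2
    have h1 := rowRdec i hi1 hi2
    have h2 := rowGdec i hi1 hi2
    have h3 := hxy2 i hi1 hi2
    have h4 : gadgetRR u v i + gadgetRG u v i = 2*i+1 := by
      unfold gadgetRR gadgetRG; split <;> omega
    omega
  -- tightness
  have tight : ∀ m, m ≤ n → ∀ i ∈ Icc 1 n, ρ i m + γ i m = min (2*i-1) (2*m) := by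
    intro m hm
    have hsumρ : ∑ i ∈ Icc 1 n, ρ i m = ∑ q ∈ Icc 1 m, (n - q + α q) := by
      rw [hρ]
      rw [sum_card_comm (Icc 1 n) (Icc 1 m) (fun i q => M i q = 0)]
      apply Finset.sum_congr rfl
      intro q hq
      simp at hq
      have := (hcol q (by omega) (by omega)).1
      rw [this]
      unfold gadgetSR
      rw [if_pos (by omega)]
    have hsumγ : ∑ i ∈ Icc 1 n, γ i m = ∑ j ∈ Icc 1 m, (n - j + 1 - α j) := by
      rw [hγ]
      rw [sum_card_comm (Icc 1 n) (Icc (n+3) (n+2+m)) (fun i q => M i q = 1)]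
      have hmap : Icc (n+3) (n+2+m) = (Icc 1 m).map (addLeftEmbedding (n+2)) := by
        rw [Finset.map_add_left_Icc]
      rw [hmap, Finset.sum_map]
      apply Finset.sum_congr rfl
      intro j hj
      simp only [addLeftEmbedding_apply] at *
      simp at hj
      have := (hcol (n+2+j) (by omega) (by omega)).2.1
      rw [this]
      unfold gadgetSG
      rw [if_neg (by omega), if_neg (by omega), if_neg (by omega)]
      have : n + 2 + j - (n+2) = j := by omega
      rw [this]
    have hsum : ∑ i ∈ Icc 1 n, (ρ i m + γ i m) = ∑ i ∈ Icc 1 n, min (2*i-1) (2*m) := by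
      rw [Finset.sum_add_distrib, hsumρ, hsumγ, sumMin n m hm, ← Finset.sum_add_distrib]
      apply Finset.sum_congr rfl
      intro j hj
      simp at hj
      have := hα01 j (by omega) (by omega)
      omega
    have hle : ∀ i ∈ Icc 1 n, ρ i m + γ i m ≤ min (2*i-1) (2*m) := by
      intro i hi
      simp at hi
      have l1 : ρ i m ≤ m := by
        rw [hρ]
        calc ((Icc 1 m).filter _).card ≤ (Icc 1 m).card := Finset.card_filter_le _ _
        _ = m := by rw [Nat.card_Icc]; omega
      have l2 : γ i m ≤ m := by
        rw [hγ]
        calc ((Icc (n+3) (n+2+m)).filter _).card ≤ (Icc (n+3) (n+2+m)).card :=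
          Finset.card_filter_le _ _
        _ = m := by rw [Nat.card_Icc]; omega
      have l3 : ρ i m ≤ ρ i n := by
        rw [hρ]
        exact Finset.card_le_card (Finset.filter_subset_filter _ (Finset.Icc_subset_Icc le_rfl hm))
      have l4 : γ i m ≤ γ i n := by
        rw [hγ]
        exact Finset.card_le_card (Finset.filter_subset_filter _ (Finset.Icc_subset_Icc le_rfl (by omega)))
      have l5 := rowSum i (by omega) (by omega)
      omega
    exact fun i hi => ((Finset.sum_eq_sum_iff_of_le hle).1 hsum) i hi
  -- rows below w are red at column w
  have redBelow : ∀ i, w + 1 ≤ i → i ≤ n → M i w = 0 := by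
    intro i hi1 hi2
    have t := tight w hwn i (by simp; omega)
    have hmin : min (2*i-1) (2*w) = 2*w := by omega
    rw [hmin] at t
    have l1 : ρ i w ≤ w := by
      rw [hρ]
      calc ((Icc 1 w).filter _).card ≤ (Icc 1 w).card := Finset.card_filter_le _ _
      _ = w := by rw [Nat.card_Icc]; omega
    have l2 : γ i w ≤ w := by
      rw [hγ]
      calc ((Icc (n+3) (n+2+w)).filter _).card ≤ (Icc (n+3) (n+2+w)).card :=
        Finset.card_filter_le _ _
      _ = w := by rw [Nat.card_Icc]; omega
    have hρw : ρ i w = w := by omega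
    have hfull : (Icc 1 w).filter (fun q => M i q = 0) = Icc 1 w := by
      apply Finset.eq_of_subset_of_card_le (Finset.filter_subset _ _)
      rw [hρ] at hρw
      simp only at hρw
      rw [hρw, Nat.card_Icc]
      omega
    have : w ∈ (Icc 1 w).filter (fun q => M i q = 0) := by
      rw [hfull]; simp; omega
    simp at this
    exact this.2
  -- w is not red at column w
  have hMww : M w w ≠ 0 := by
    intro hM
    have h0 := (hcol w (by omega) (by omega)).1
    have hz : gadgetSR n k α w = n - w := by
      unfold gadgetSR; rw [if_pos hwn, hαw]
      omega
    rw [hz] at h0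
    have hsub : insert w (Icc (w+1) n) ⊆ (Icc 1 n).filter (fun i => M i w = 0) := by
      intro i hi
      simp at hi
      rcases hi with rfl | hi
      · simp [hM]; omega
      · simp
        exact ⟨⟨by omega, hi.2⟩, redBelow i hi.1 hi.2⟩
    have hcard := Finset.card_le_card hsub
    rw [Finset.card_insert_of_notMem (by simp only [Finset.mem_Icc]; omega), Nat.card_Icc, h0] at hcard
    omega
  -- ρ w n = ρ w w ≤ w - 1
  have t1 := tight n le_rfl w (by simp; omega)
  have t2 := tight w hwn w (by simp; omega)
  have l3 : ρ w w ≤ ρ w n := by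
    rw [hρ]
    exact Finset.card_le_card (Finset.filter_subset_filter _ (Finset.Icc_subset_Icc le_rfl hwn))
  have l4 : γ w w ≤ γ w n := by
    rw [hγ]
    exact Finset.card_le_card (Finset.filter_subset_filter _ (Finset.Icc_subset_Icc le_rfl (by omega)))
  have hm1 : min (2*w-1) (2*n) = 2*w-1 := by omega
  have hm2 : min (2*w-1) (2*w) = 2*w-1 := by omega
  rw [hm1] at t1
  rw [hm2] at t2
  have hρeq : ρ w n = ρ w w := by omega
  have hρle : ρ w w ≤ w - 1 := by
    have hsub : (Icc 1 w).filter (fun q => M w q = 0) ⊆ Icc 1 (w-1) := by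
      intro q hq
      simp at hq ⊢
      rcases hq with ⟨⟨hq1, hq2⟩, hq3⟩
      refine ⟨hq1, ?_⟩
      rcases Nat.lt_or_ge q w with h | h
      · omega
      · exfalso
        have hqw : q = w := by omega
        exact hMww (hqw ▸ hq3)
    calc ρ w w ≤ (Icc 1 (w-1)).card := Finset.card_le_card hsub
    _ = w - 1 := by rw [Nat.card_Icc]; omega
  -- conclude xR w = 2
  have hr := rowRdec w hw1 hwn
  have hRR : gadgetRR u v w = w + 1 := by unfold gadgetRR; rw [if_pos hwuv]
  rw [hRR] at hr
  have hx2 : xR w = 2 := by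
    have : xR w ≤ 2 := by simp only [hxR]; split <;> split <;> omega
    omega
  simp only [hxR] at hx2
  constructor
  · by_contra hc
    rw [if_neg hc] at hx2
    split at hx2 <;> omega
  · by_contra hc
    rw [if_neg hc] at hx2
    split at hx2 <;> omega


lemma cardIccLe (N t : ℕ) (h : t ≤ N) : ((Icc 1 N).filter (fun q => q ≤ t)).card = t := by
  have : (Icc 1 N).filter (fun q => q ≤ t) = Icc 1 t := by ext q; simp; omega
  rw [this, Nat.card_Icc]; omega

lemma cardIccShift (c N t : ℕ) (h : t ≤ N) :
    ((Icc (c+1) (c+N)).filter (fun q => q ≤ c + t)).card = t := by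
  have : (Icc (c+1) (c+N)).filter (fun q => q ≤ c + t) = Icc (c+1) (c+t) := by
    ext q; simp; omega
  rw [this, Nat.card_Icc]; omega

lemma ite_eq_iff_pos {P : Prop} [Decidable P] {a b c : Fin 3} (h1 : a = c) (h2 : b ≠ c) :
    (if P then a else b) = c ↔ P := by
  constructor
  · intro h; by_contra hP; rw [if_neg hP] at h; exact h2 h
  · intro hP; rw [if_pos hP]; exact h1

lemma ite_eq_iff_neg {P : Prop} [Decidable P] {a b c : Fin 3} (h1 : a ≠ c) (h2 : b = c) :
    (if P then a else b) = c ↔ ¬ P := by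
  constructor
  · intro h hP; rw [if_pos hP] at h; exact h1 h
  · intro hP; rw [if_neg hP]; exact h2

lemma ite_ne_fin3 {P : Prop} [Decidable P] {a b c : Fin 3} (h1 : a ≠ c) (h2 : b ≠ c) :
    (if P then a else b) ≠ c := by
  split
  · exact h1
  · exact h2

/-- the construction matrix -/
def gadgetM (n u v w : ℕ) (α : ℕ → ℕ) (i q : ℕ) : Fin 3 :=
  if q ≤ n then (if q ≤ i - 1 + α i then 0 else 2)
  else if q = n + 1 then (if i = w then 0 else 1)
  else if q = n + 2 then
    (if (i = w ∧ α i = 0) ∨ (i ≠ w ∧ ((i = u ∨ i = v) ∨ α i = 0)) then 0 else 1)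
  else if q ≤ n + 2 + (i - α i) then 1 else 2

lemma cardAlpha0 (n k : ℕ) (hkn : k ≤ n) (α : ℕ → ℕ) (hα01 : ∀ j, 1 ≤ j → j ≤ n → α j ≤ 1)
    (hαk : ∑ j ∈ Finset.Icc 1 n, α j = k) :
    ((Icc 1 n).filter (fun i => α i = 0)).card = n - k := by
  have h1 : ((Icc 1 n).filter (fun i => ¬ (α i = 0))).card = k := by
    rw [Finset.card_filter, ← hαk]
    apply Finset.sum_congr rfl
    intro i hi
    simp only [Finset.mem_Icc] at hi
    have := hα01 i (by omega) (by omega)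
    by_cases h : α i = 0
    · simp [h]
    · rw [if_pos h]; omega
  have h2 := Finset.card_filter_add_card_filter_not
    (s := Icc 1 n) (p := fun i => α i = 0)
  rw [Nat.card_Icc] at h2
  omega

lemma construction (n k u v : ℕ) (hk1 : 1 ≤ k) (hkn : k ≤ n)
    (hu : 1 ≤ u) (hun : u ≤ n) (hv : 1 ≤ v) (hvn : v ≤ n) (huv : u ≠ v)
    (α : ℕ → ℕ)
    (hα01 : ∀ j, 1 ≤ j → j ≤ n → α j ≤ 1)
    (hαk : ∑ j ∈ Finset.Icc 1 n, α j = k)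
    (h : 1 ≤ α u + α v) :
    ∃ M : ℕ → ℕ → Fin 3,
    (∀ i, 1 ≤ i → i ≤ n →
      ((Finset.Icc 1 (2 * n + 2)).filter (fun q => M i q = 0)).card = gadgetRR u v i ∧
      ((Finset.Icc 1 (2 * n + 2)).filter (fun q => M i q = 1)).card = gadgetRG u v i ∧
      ((Finset.Icc 1 (2 * n + 2)).filter (fun q => M i q = 2)).card = gadgetRY n u v i) ∧
    (∀ q, 1 ≤ q → q ≤ 2 * n + 2 →
      ((Finset.Icc 1 n).filter (fun i => M i q = 0)).card = gadgetSR n k α q ∧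
      ((Finset.Icc 1 n).filter (fun i => M i q = 1)).card = gadgetSG n k α q ∧
      ((Finset.Icc 1 n).filter (fun i => M i q = 2)).card = gadgetSY n k α α q) := by
  have hn1 : 1 ≤ n := le_trans hk1 hkn
  obtain ⟨w, w', hor, hww', hw1, hwn, hw'1, hw'n, hαw'⟩ :
      ∃ w w', ((w = u ∧ w' = v) ∨ (w = v ∧ w' = u)) ∧ w ≠ w' ∧ 1 ≤ w ∧ w ≤ n ∧
        1 ≤ w' ∧ w' ≤ n ∧ α w' = 1 := by
    have h1 := hα01 u hu hun
    have h2 := hα01 v hv hvn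
    by_cases hαu : α u = 0
    · exact ⟨u, v, Or.inl ⟨rfl, rfl⟩, huv, hu, hun, hv, hvn, by omega⟩
    · exact ⟨v, u, Or.inr ⟨rfl, rfl⟩, Ne.symm huv, hv, hvn, hu, hun, by omega⟩
  have hiff : ∀ j, (j = u ∨ j = v) ↔ (j = w ∨ j = w') := by
    rcases hor with ⟨h1, h2⟩ | ⟨h1, h2⟩ <;> subst h1 <;> subst h2 <;> intro j <;> tauto
  refine ⟨gadgetM n u v w α, ?_, ?_⟩
  · -- rows
    intro i hi1 hi2
    have hαi := hα01 i hi1 hi2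
    -- evaluations
    have hM1 : ∀ q, 1 ≤ q → q ≤ n →
        ((gadgetM n u v w α i q = 0) ↔ q ≤ i - 1 + α i) := by
      intro q hq1 hq2
      unfold gadgetM
      rw [if_pos hq2]
      exact ite_eq_iff_pos rfl (by decide)
    have hM1g : ∀ q, 1 ≤ q → q ≤ n → gadgetM n u v w α i q ≠ 1 := by
      intro q hq1 hq2
      unfold gadgetM
      rw [if_pos hq2]
      exact ite_ne_fin3 (by decide) (by decide)
    have hb2 : (gadgetM n u v w α i (n+1) = 0) ↔ i = w := by
      unfold gadgetM
      rw [if_neg (by omega), if_pos rfl]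
      exact ite_eq_iff_pos rfl (by decide)
    have hb2g : (gadgetM n u v w α i (n+1) = 1) ↔ ¬ (i = w) := by
      unfold gadgetM
      rw [if_neg (by omega), if_pos rfl]
      exact ite_eq_iff_neg (by decide) rfl
    have hb3 : (gadgetM n u v w α i (n+2) = 0) ↔
        (i = w ∧ α i = 0 ∨ i ≠ w ∧ ((i = u ∨ i = v) ∨ α i = 0)) := by
      unfold gadgetM
      rw [if_neg (by omega), if_neg (by omega), if_pos rfl]
      exact ite_eq_iff_pos rfl (by decide)
    have hb3g : (gadgetM n u v w α i (n+2) = 1) ↔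
        ¬ (i = w ∧ α i = 0 ∨ i ≠ w ∧ ((i = u ∨ i = v) ∨ α i = 0)) := by
      unfold gadgetM
      rw [if_neg (by omega), if_neg (by omega), if_pos rfl]
      exact ite_eq_iff_neg (by decide) rfl
    have hM4 : ∀ q, n+3 ≤ q → q ≤ 2*n+2 →
        ((gadgetM n u v w α i q = 1) ↔ q ≤ n + 2 + (i - α i)) := by
      intro q hq1 hq2
      unfold gadgetM
      rw [if_neg (by omega), if_neg (by omega), if_neg (by omega)]
      exact ite_eq_iff_pos rfl (by decide)
    have hM4r : ∀ q, n+3 ≤ q → q ≤ 2*n+2 → gadgetM n u v w α i q ≠ 0 := by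
      intro q hq1 hq2
      unfold gadgetM
      rw [if_neg (by omega), if_neg (by omega), if_neg (by omega)]
      exact ite_ne_fin3 (by decide) (by decide)
    -- red row count
    have hR : ((Finset.Icc 1 (2 * n + 2)).filter (fun q => gadgetM n u v w α i q = 0)).card
        = gadgetRR u v i := by
      rw [card_split _ 1 n (2*n+2) (by omega) (by omega),
          card_split _ (n+1) (n+1) (2*n+2) (by omega) (by omega),
          card_split _ (n+2) (n+2) (2*n+2) (by omega) (by omega),
          card_single, card_single]
      have hp1 : ((Icc 1 n).filter (fun q => gadgetM n u v w α i q = 0)).card = i - 1 + α i := by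
        rw [Finset.filter_congr (fun q hq => by
          simp only [Finset.mem_Icc] at hq
          exact hM1 q hq.1 hq.2)]
        exact cardIccLe n _ (by omega)
      have hp4 : ((Icc (n+2+1) (2*n+2)).filter (fun q => gadgetM n u v w α i q = 0)).card = 0 := by
        rw [Finset.card_eq_zero, Finset.filter_eq_empty_iff]
        intro q hq
        simp only [Finset.mem_Icc] at hq
        exact hM4r q (by omega) (by omega)
      rw [hp1, hp4]
      simp only [hb2, hb3]
      unfold gadgetRR
      by_cases hiw : i = w
      · have he : i = u ∨ i = v := (hiff i).2 (Or.inl hiw)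
        rw [if_pos hiw, if_pos he]
        by_cases hz : α i = 0
        · rw [if_pos (Or.inl ⟨hiw, hz⟩)]; omega
        · rw [if_neg (by rintro (⟨_, h⟩ | ⟨hne, _⟩); exact hz h; exact hne hiw)]; omega
      · rw [if_neg hiw]
        by_cases hiw' : i = w'
        · have he : i = u ∨ i = v := (hiff i).2 (Or.inr hiw')
          have hz : α i = 1 := by rw [hiw']; exact hαw'
          rw [if_pos he, if_pos (Or.inr ⟨hiw, Or.inl he⟩)]; omega
        · have he : ¬ (i = u ∨ i = v) := fun hh => by
            rcases (hiff i).1 hh with hx | hx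
            · exact hiw hx
            · exact hiw' hx
          rw [if_neg he]
          by_cases hz : α i = 0
          · rw [if_pos (Or.inr ⟨hiw, Or.inr hz⟩)]; omega
          · rw [if_neg (by
              rintro (⟨h1, _⟩ | ⟨_, h2 | h2⟩)
              · exact hiw h1
              · exact he h2
              · exact hz h2)]
            omega
    -- green row count
    have hG : ((Finset.Icc 1 (2 * n + 2)).filter (fun q => gadgetM n u v w α i q = 1)).card
        = gadgetRG u v i := by
      rw [card_split _ 1 n (2*n+2) (by omega) (by omega),
          card_split _ (n+1) (n+1) (2*n+2) (by omega) (by omega),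
          card_split _ (n+2) (n+2) (2*n+2) (by omega) (by omega),
          card_single, card_single]
      have hp1 : ((Icc 1 n).filter (fun q => gadgetM n u v w α i q = 1)).card = 0 := by
        rw [Finset.card_eq_zero, Finset.filter_eq_empty_iff]
        intro q hq
        simp only [Finset.mem_Icc] at hq
        exact hM1g q hq.1 hq.2
      have hp4 : ((Icc (n+2+1) (2*n+2)).filter (fun q => gadgetM n u v w α i q = 1)).card
          = i - α i := by
        rw [Finset.filter_congr (fun q hq => by
          simp only [Finset.mem_Icc] at hq
          exact hM4 q (by omega) (by omega))]
        rw [show (2*n+2 : ℕ) = n+2+n from by omega]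
        exact cardIccShift (n+2) n _ (by omega)
      rw [hp1, hp4]
      simp only [hb2g, hb3g]
      unfold gadgetRG
      by_cases hiw : i = w
      · have he : i = u ∨ i = v := (hiff i).2 (Or.inl hiw)
        rw [if_pos he, if_neg (fun hc => hc hiw)]
        by_cases hz : α i = 0
        · rw [if_neg (fun hc => hc (Or.inl ⟨hiw, hz⟩))]; omega
        · rw [if_pos (by rintro (⟨_, h⟩ | ⟨hne, _⟩); exact hz h; exact hne hiw)]; omega
      · rw [if_pos hiw]
        by_cases hiw' : i = w'
        · have he : i = u ∨ i = v := (hiff i).2 (Or.inr hiw')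
          have hz : α i = 1 := by rw [hiw']; exact hαw'
          rw [if_pos he, if_neg (fun hc => hc (Or.inr ⟨hiw, Or.inl he⟩))]; omega
        · have he : ¬ (i = u ∨ i = v) := fun hh => by
            rcases (hiff i).1 hh with hx | hx
            · exact hiw hx
            · exact hiw' hx
          rw [if_neg he]
          by_cases hz : α i = 0
          · rw [if_neg (fun hc => hc (Or.inr ⟨hiw, Or.inr hz⟩))]; omega
          · rw [if_pos (by
              rintro (⟨h1, _⟩ | ⟨_, h2 | h2⟩)
              · exact hiw h1
              · exact he h2
              · exact hz h2)]
            omega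
    refine ⟨hR, hG, ?_⟩
    have h012 := card012 (Icc 1 (2*n+2)) (fun q => gadgetM n u v w α i q)
    rw [hR, hG, Nat.card_Icc] at h012
    have hb : gadgetRR u v i + gadgetRG u v i = 2*i+1 := by
      unfold gadgetRR gadgetRG; split <;> omega
    unfold gadgetRY
    omega
  · -- columns
    intro q hq1 hq2
    rcases (by omega : q ≤ n ∨ q = n+1 ∨ q = n+2 ∨ (n+3 ≤ q ∧ q ≤ 2*n+2)) with hqn | hq | hq | ⟨hq3, hq4⟩
    · -- left block
      have heq : (Icc 1 n).filter (fun i => gadgetM n u v w α i q = 0)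
          = (Icc 1 n).filter (fun i => q ≤ i - 1 + α i) :=
        Finset.filter_congr (fun i _ => by
          unfold gadgetM; rw [if_pos hqn]; exact ite_eq_iff_pos rfl (by decide))
      have hαq := hα01 q hq1 hqn
      have hp2 : ((Icc (q+1) n).filter (fun i => q ≤ i - 1 + α i)).card = n - q := by
        rw [Finset.filter_true_of_mem (fun i hi => by
          simp only [Finset.mem_Icc] at hi; omega), Nat.card_Icc]
        omega
      have hR' : ((Icc 1 n).filter (fun i => gadgetM n u v w α i q = 0)).card
          = gadgetSR n k α q := by
        rw [heq, card_split _ 1 q n (by omega) hqn, hp2]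
        unfold gadgetSR
        rw [if_pos hqn]
        by_cases hz : α q = 0
        · have hp1 : ((Icc 1 q).filter (fun i => q ≤ i - 1 + α i)).card = 0 := by
            rw [Finset.card_eq_zero, Finset.filter_eq_empty_iff]
            intro i hi
            simp only [Finset.mem_Icc] at hi
            have := hα01 i (by omega) (by omega)
            by_cases hiq : i = q
            · subst hiq; omega
            · omega
          rw [hp1]; omega
        · have hp1 : (Icc 1 q).filter (fun i => q ≤ i - 1 + α i) = {q} := by
            ext i
            simp only [Finset.mem_filter, Finset.mem_Icc, Finset.mem_singleton]
            constructor
            · rintro ⟨⟨h1, h2⟩, h3⟩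
              have := hα01 i (by omega) (by omega)
              omega
            · rintro rfl
              exact ⟨⟨by omega, le_rfl⟩, by omega⟩
          rw [hp1, Finset.card_singleton]; omega
      have hG' : ((Icc 1 n).filter (fun i => gadgetM n u v w α i q = 1)).card
          = gadgetSG n k α q := by
        have hz : (Icc 1 n).filter (fun i => gadgetM n u v w α i q = 1) = ∅ := by
          rw [Finset.filter_eq_empty_iff]
          intro i hi
          unfold gadgetM; rw [if_pos hqn]
          exact ite_ne_fin3 (by decide) (by decide)
        rw [hz]
        unfold gadgetSG
        rw [if_pos hqn, Finset.card_empty]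
      refine ⟨hR', hG', ?_⟩
      have h012 := card012 (Icc 1 n) (fun i => gadgetM n u v w α i q)
      rw [hR', hG', Nat.card_Icc] at h012
      unfold gadgetSY
      omega
    · -- column n+1
      subst hq
      have heq : (Icc 1 n).filter (fun i => gadgetM n u v w α i (n+1) = 0)
          = (Icc 1 n).filter (fun i => i = w) :=
        Finset.filter_congr (fun i _ => by
          unfold gadgetM; rw [if_neg (by omega), if_pos rfl]
          exact ite_eq_iff_pos rfl (by decide))
      have hcW : ((Icc 1 n).filter (fun i => i = w)).card = 1 := by
        rw [Finset.filter_eq', if_pos (by simp only [Finset.mem_Icc]; omega)]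
        exact Finset.card_singleton w
      have hR' : ((Icc 1 n).filter (fun i => gadgetM n u v w α i (n+1) = 0)).card
          = gadgetSR n k α (n+1) := by
        rw [heq, hcW]
        unfold gadgetSR
        rw [if_neg (by omega), if_pos rfl]
      have heqg : (Icc 1 n).filter (fun i => gadgetM n u v w α i (n+1) = 1)
          = (Icc 1 n).filter (fun i => ¬ (i = w)) :=
        Finset.filter_congr (fun i _ => by
          unfold gadgetM; rw [if_neg (by omega), if_pos rfl]
          exact ite_eq_iff_neg (by decide) rfl)
      have hG' : ((Icc 1 n).filter (fun i => gadgetM n u v w α i (n+1) = 1)).card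
          = gadgetSG n k α (n+1) := by
        have hcc := Finset.card_filter_add_card_filter_not
          (s := Icc 1 n) (p := fun i => i = w)
        rw [Nat.card_Icc] at hcc
        rw [heqg]
        unfold gadgetSG
        rw [if_neg (by omega), if_pos rfl]
        omega
      refine ⟨hR', hG', ?_⟩
      have h012 := card012 (Icc 1 n) (fun i => gadgetM n u v w α i (n+1))
      rw [hR', hG', Nat.card_Icc] at h012
      unfold gadgetSY
      omega
    · -- column n+2
      subst hq
      have heq : (Icc 1 n).filter (fun i => gadgetM n u v w α i (n+2) = 0)
          = (Icc 1 n).filter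
            (fun i => (i = w ∧ α i = 0 ∨ i ≠ w ∧ ((i = u ∨ i = v) ∨ α i = 0))) :=
        Finset.filter_congr (fun i _ => by
          unfold gadgetM; rw [if_neg (by omega), if_neg (by omega), if_pos rfl]
          exact ite_eq_iff_pos rfl (by decide))
      have hset : (Icc 1 n).filter
            (fun i => (i = w ∧ α i = 0 ∨ i ≠ w ∧ ((i = u ∨ i = v) ∨ α i = 0)))
          = insert w' ((Icc 1 n).filter (fun i => α i = 0)) := by
        ext i
        simp only [Finset.mem_filter, Finset.mem_Icc, Finset.mem_insert]
        constructor
        · rintro ⟨hi, hPi⟩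
          rcases hPi with ⟨hiw, hz⟩ | ⟨hne, hor2 | hz⟩
          · exact Or.inr ⟨hi, hz⟩
          · rcases (hiff i).1 hor2 with hx | hx
            · exact absurd hx hne
            · exact Or.inl hx
          · exact Or.inr ⟨hi, hz⟩
        · rintro (hiw' | ⟨hi, hz⟩)
          · rw [hiw']
            exact ⟨⟨hw'1, hw'n⟩, Or.inr ⟨Ne.symm hww', Or.inl ((hiff w').2 (Or.inr rfl))⟩⟩
          · by_cases hiw : i = w
            · exact ⟨hi, Or.inl ⟨hiw, hz⟩⟩
            · exact ⟨hi, Or.inr ⟨hiw, Or.inr hz⟩⟩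
      have hcP : ((Icc 1 n).filter
            (fun i => (i = w ∧ α i = 0 ∨ i ≠ w ∧ ((i = u ∨ i = v) ∨ α i = 0)))).card
          = n - k + 1 := by
        rw [hset, Finset.card_insert_of_notMem (by
          simp only [Finset.mem_filter]
          rintro ⟨_, hz⟩
          rw [hαw'] at hz
          exact one_ne_zero hz), cardAlpha0 n k hkn α hα01 hαk]
      have hR' : ((Icc 1 n).filter (fun i => gadgetM n u v w α i (n+2) = 0)).card
          = gadgetSR n k α (n+2) := by
        rw [heq, hcP]
        unfold gadgetSR
        rw [if_neg (by omega), if_neg (by omega), if_pos rfl]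
      have heqg : (Icc 1 n).filter (fun i => gadgetM n u v w α i (n+2) = 1)
          = (Icc 1 n).filter
            (fun i => ¬ (i = w ∧ α i = 0 ∨ i ≠ w ∧ ((i = u ∨ i = v) ∨ α i = 0))) :=
        Finset.filter_congr (fun i _ => by
          unfold gadgetM; rw [if_neg (by omega), if_neg (by omega), if_pos rfl]
          exact ite_eq_iff_neg (by decide) rfl)
      have hG' : ((Icc 1 n).filter (fun i => gadgetM n u v w α i (n+2) = 1)).card
          = gadgetSG n k α (n+2) := by
        have hcc := Finset.card_filter_add_card_filter_not
          (s := Icc 1 n)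
          (p := fun i => (i = w ∧ α i = 0 ∨ i ≠ w ∧ ((i = u ∨ i = v) ∨ α i = 0)))
        rw [Nat.card_Icc] at hcc
        rw [heqg]
        unfold gadgetSG
        rw [if_neg (by omega), if_neg (by omega), if_pos rfl]
        omega
      refine ⟨hR', hG', ?_⟩
      have h012 := card012 (Icc 1 n) (fun i => gadgetM n u v w α i (n+2))
      rw [hR', hG', Nat.card_Icc] at h012
      unfold gadgetSY
      omega
    · -- right block
      have hαj := hα01 (q - (n+2)) (by omega) (by omega)
      have heq : (Icc 1 n).filter (fun i => gadgetM n u v w α i q = 1)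
          = (Icc 1 n).filter (fun i => q - (n+2) ≤ i - α i) :=
        Finset.filter_congr (fun i _ => by
          have h1 : (gadgetM n u v w α i q = 1) ↔ q ≤ n + 2 + (i - α i) := by
            unfold gadgetM
            rw [if_neg (by omega), if_neg (by omega), if_neg (by omega)]
            exact ite_eq_iff_pos rfl (by decide)
          exact h1.trans (by omega))
      have hp2 : ((Icc (q-(n+2)+1) n).filter (fun i => q - (n+2) ≤ i - α i)).card
          = n - (q - (n+2)) := by
        rw [Finset.filter_true_of_mem (fun i hi => by
          simp only [Finset.mem_Icc] at hi
          have := hα01 i (by omega) (by omega)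
          omega), Nat.card_Icc]
        omega
      have hG' : ((Icc 1 n).filter (fun i => gadgetM n u v w α i q = 1)).card
          = gadgetSG n k α q := by
        rw [heq, card_split _ 1 (q-(n+2)) n (by omega) (by omega), hp2]
        unfold gadgetSG
        rw [if_neg (by omega), if_neg (by omega), if_neg (by omega)]
        by_cases hz : α (q-(n+2)) = 0
        · have hp1 : (Icc 1 (q-(n+2))).filter (fun i => q - (n+2) ≤ i - α i)
              = {q - (n+2)} := by
            ext i
            simp only [Finset.mem_filter, Finset.mem_Icc, Finset.mem_singleton]
            constructor
            · rintro ⟨⟨h1, h2⟩, h3⟩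
              omega
            · rintro rfl
              exact ⟨⟨by omega, le_rfl⟩, by omega⟩
          rw [hp1, Finset.card_singleton]
          omega
        · have hp1 : ((Icc 1 (q-(n+2))).filter (fun i => q - (n+2) ≤ i - α i)).card = 0 := by
            rw [Finset.card_eq_zero, Finset.filter_eq_empty_iff]
            intro i hi
            simp only [Finset.mem_Icc] at hi
            by_cases hiq : i = q - (n+2)
            · subst hiq; omega
            · omega
          rw [hp1]
          omega
      have hR' : ((Icc 1 n).filter (fun i => gadgetM n u v w α i q = 0)).card
          = gadgetSR n k α q := by
        have hz : (Icc 1 n).filter (fun i => gadgetM n u v w α i q = 0) = ∅ := by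
          rw [Finset.filter_eq_empty_iff]
          intro i hi
          unfold gadgetM
          rw [if_neg (by omega), if_neg (by omega), if_neg (by omega)]
          exact ite_ne_fin3 (by decide) (by decide)
        rw [hz, Finset.card_empty]
        unfold gadgetSR
        rw [if_neg (by omega), if_neg (by omega), if_neg (by omega)]
      refine ⟨hR', hG', ?_⟩
      have h012 := card012 (Icc 1 n) (fun i => gadgetM n u v w α i q)
      rw [hR', hG', Nat.card_Icc] at h012
      unfold gadgetSY
      omega

/-- Suppose `α = β` in the gadget instance.  Then the gadget instance is
feasible if and only if `α_u + α_v ≥ 1`. -/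
theorem stmt_11 (n k u v : ℕ) (hk1 : 1 ≤ k) (hkn : k ≤ n)
    (hu : 1 ≤ u) (hun : u ≤ n) (hv : 1 ≤ v) (hvn : v ≤ n) (huv : u ≠ v)
    (α : ℕ → ℕ)
    (hα01 : ∀ j, 1 ≤ j → j ≤ n → α j ≤ 1)
    (hαk : ∑ j ∈ Finset.Icc 1 n, α j = k) :
    GadgetFeasible n k u v α α ↔ 1 ≤ α u + α v := by
  constructor
  · intro hF
    unfold GadgetFeasible at hF
    obtain ⟨M, hrow, hcol⟩ := hF
    by_contra hcon
    have h1 := forced n k u v hk1 hkn α hα01 M hrow hcol u hu hun (Or.inl rfl) (by omega)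
    have h2 := forced n k u v hk1 hkn α hα01 M hrow hcol v hv hvn (Or.inr rfl) (by omega)
    have hc := (hcol (n+1) (by omega) (by omega)).1
    have hz : gadgetSR n k α (n+1) = 1 := by
      unfold gadgetSR
      rw [if_neg (by omega), if_pos rfl]
    rw [hz] at hc
    have hsub : ({u, v} : Finset ℕ) ⊆ (Icc 1 n).filter (fun i => M i (n+1) = 0) := by
      intro x hx
      simp only [Finset.mem_insert, Finset.mem_singleton] at hx
      rcases hx with rfl | rfl <;> simp only [Finset.mem_filter, Finset.mem_Icc]
      · exact ⟨⟨hu, hun⟩, h1.1⟩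
      · exact ⟨⟨hv, hvn⟩, h2.1⟩
    have hcard := Finset.card_le_card hsub
    rw [hc, Finset.card_insert_of_notMem (by simp [huv]), Finset.card_singleton] at hcard
    omega
  · intro h
    unfold GadgetFeasible
    exact construction n k u v hk1 hkn hu hun hv hvn huv α hα01 hαk h

end GadgetAux
end

section
/- Let r^R, r^G ∈ ℕ^m and s^R, s^G ∈ ℕ^n satisfy r^R_i + r^G_i ≤ n for all i, s^R_j + s^G_j ≤ m for all j, ∑_i r^R_i = ∑_j s^R_j, and ∑_i r^G_i = ∑_j s^G_j. Consider the vertex set V consisting of m row-vertices u_1,…,u_m and n column-vertices w_1,…,w_n. Then there exists a matrix M ∈ {R,G,Y}^{m×n} whose red row/column projections are (r^R, s^R) and whose green row/column projections are (r^G, s^G) if and only if there exist two disjoint sets E^R, E^G of unordered pairs of distinct vertices of V such that every vertex has red degree and green degree given by: deg_{E^R}(u_i) = r^R_i + (m−1) and deg_{E^G}(u_i) = r^G_i for 1 ≤ i ≤ m, and deg_{E^R}(w_j) = s^R_j and deg_{E^G}(w_j) = s^G_j + (n−1) for 1 ≤ j ≤ n. -/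
/-- Degree of a vertex `v` in a set `E` of unordered pairs of vertices:
the number of pairs in `E` containing `v`. -/
def edgeDeg {V : Type*} [DecidableEq V] (E : Finset (Sym2 V)) (v : V) : ℕ :=
  (E.filter (fun e => v ∈ e)).card

section Helpers
open Finset

lemma filter_sum_card {α β : Type*} [Fintype α] [Fintype β] (p : α ⊕ β → Prop) [DecidablePred p] :
    ((univ : Finset (α ⊕ β)).filter p).card
      = ((univ : Finset α).filter (fun a => p (Sum.inl a))).card
        + ((univ : Finset β).filter (fun b => p (Sum.inr b))).card := by
  simp only [Finset.card_filter]
  exact Fintype.sum_sum_type _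

lemma edgeDeg_eq' {V : Type*} [Fintype V] [DecidableEq V] (E : Finset (Sym2 V))
    (hE : ∀ e ∈ E, ¬ e.IsDiag) (v : V) :
    (E.filter (fun e => v ∈ e)).card
      = ((univ : Finset V).filter (fun w => s(v, w) ∈ E)).card := by
  refine Finset.card_bij' (fun e he => Sym2.Mem.other' (Finset.mem_filter.mp he).2)
    (fun w _ => s(v, w)) ?_ ?_ ?_ ?_
  · intro e he
    simp only [mem_filter, mem_univ, true_and]
    rw [Sym2.other_spec' (Finset.mem_filter.mp he).2]
    exact (Finset.mem_filter.mp he).1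
  · intro w hw
    simp only [mem_filter, mem_univ, true_and] at hw ⊢
    exact ⟨hw, Sym2.mem_mk_left v w⟩
  · intro e he
    exact Sym2.other_spec' (Finset.mem_filter.mp he).2
  · intro w hw
    simp only [mem_filter, mem_univ, true_and] at hw
    have hne : v ≠ w := fun h =>
      hE _ hw (by rw [← h]; exact Sym2.mk_isDiag_iff.mpr rfl)
    have h2 := Sym2.other_spec' (Sym2.mem_mk_left v w)
    rcases Sym2.eq_iff.mp h2 with ⟨_, h⟩ | ⟨h1, _⟩
    · exact h
    · exact absurd h1.symm (Ne.symm hne)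

/-- Red edge set built from a matrix: row clique plus red cross edges. -/
def ERof (m n : ℕ) (M : Fin m → Fin n → Fin 3) : Finset (Sym2 (Fin m ⊕ Fin n)) :=
  Finset.univ.filter (fun e =>
    (∃ x y : Fin m, x ≠ y ∧ e = s(Sum.inl x, Sum.inl y)) ∨
    (∃ x y, M x y = 0 ∧ e = s(Sum.inl x, Sum.inr y)))

/-- Green edge set built from a matrix: column clique plus green cross edges. -/
def EGof (m n : ℕ) (M : Fin m → Fin n → Fin 3) : Finset (Sym2 (Fin m ⊕ Fin n)) :=
  Finset.univ.filter (fun e =>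
    (∃ x y : Fin n, x ≠ y ∧ e = s(Sum.inr x, Sum.inr y)) ∨
    (∃ x y, M x y = 1 ∧ e = s(Sum.inl x, Sum.inr y)))

lemma mem_ERof {m n : ℕ} {M : Fin m → Fin n → Fin 3} {e : Sym2 (Fin m ⊕ Fin n)} :
    e ∈ ERof m n M ↔ (∃ x y : Fin m, x ≠ y ∧ e = s(Sum.inl x, Sum.inl y)) ∨
      (∃ x y, M x y = 0 ∧ e = s(Sum.inl x, Sum.inr y)) := by
  simp [ERof]

lemma mem_EGof {m n : ℕ} {M : Fin m → Fin n → Fin 3} {e : Sym2 (Fin m ⊕ Fin n)} :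
    e ∈ EGof m n M ↔ (∃ x y : Fin n, x ≠ y ∧ e = s(Sum.inr x, Sum.inr y)) ∨
      (∃ x y, M x y = 1 ∧ e = s(Sum.inl x, Sum.inr y)) := by
  simp [EGof]

lemma keyR_LL {m n : ℕ} {M : Fin m → Fin n → Fin 3} (a b : Fin m) :
    (s(Sum.inl a, Sum.inl b) : Sym2 (Fin m ⊕ Fin n)) ∈ ERof m n M ↔ a ≠ b := by
  rw [mem_ERof]
  constructor
  · rintro (⟨x, y, hxy, heq⟩ | ⟨x, y, hxy, heq⟩)
    · rcases Sym2.eq_iff.mp heq with ⟨h1, h2⟩ | ⟨h1, h2⟩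
      · rw [Sum.inl.inj h1, Sum.inl.inj h2]; exact hxy
      · rw [Sum.inl.inj h1, Sum.inl.inj h2]; exact hxy.symm
    · rcases Sym2.eq_iff.mp heq with ⟨h1, h2⟩ | ⟨h1, h2⟩
      · exact absurd h2 (Sum.inl_ne_inr)
      · exact absurd h1 (Sum.inl_ne_inr)
  · intro h; exact Or.inl ⟨a, b, h, rfl⟩

lemma keyR_LR {m n : ℕ} {M : Fin m → Fin n → Fin 3} (a : Fin m) (b : Fin n) :
    (s(Sum.inl a, Sum.inr b) : Sym2 (Fin m ⊕ Fin n)) ∈ ERof m n M ↔ M a b = 0 := by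
  rw [mem_ERof]
  constructor
  · rintro (⟨x, y, hxy, heq⟩ | ⟨x, y, hxy, heq⟩)
    · rcases Sym2.eq_iff.mp heq with ⟨h1, h2⟩ | ⟨h1, h2⟩
      · exact absurd h2 (Sum.inr_ne_inl)
      · exact absurd h2 (Sum.inr_ne_inl)
    · rcases Sym2.eq_iff.mp heq with ⟨h1, h2⟩ | ⟨h1, h2⟩
      · rw [Sum.inl.inj h1, Sum.inr.inj h2]; exact hxy
      · exact absurd h1 (Sum.inl_ne_inr)
  · intro h; exact Or.inr ⟨a, b, h, rfl⟩

lemma keyR_RR {m n : ℕ} {M : Fin m → Fin n → Fin 3} (a b : Fin n) :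
    (s(Sum.inr a, Sum.inr b) : Sym2 (Fin m ⊕ Fin n)) ∉ ERof m n M := by
  intro h
  rw [mem_ERof] at h
  rcases h with ⟨x, y, hxy, heq⟩ | ⟨x, y, hxy, heq⟩ <;>
    rcases Sym2.eq_iff.mp heq with ⟨h1, h2⟩ | ⟨h1, h2⟩ <;>
    first
      | exact absurd h1 (Sum.inr_ne_inl)
      | exact absurd h2 (Sum.inr_ne_inl)

lemma keyG_RR {m n : ℕ} {M : Fin m → Fin n → Fin 3} (a b : Fin n) :
    (s(Sum.inr a, Sum.inr b) : Sym2 (Fin m ⊕ Fin n)) ∈ EGof m n M ↔ a ≠ b := by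
  rw [mem_EGof]
  constructor
  · rintro (⟨x, y, hxy, heq⟩ | ⟨x, y, hxy, heq⟩)
    · rcases Sym2.eq_iff.mp heq with ⟨h1, h2⟩ | ⟨h1, h2⟩
      · rw [Sum.inr.inj h1, Sum.inr.inj h2]; exact hxy
      · rw [Sum.inr.inj h1, Sum.inr.inj h2]; exact hxy.symm
    · rcases Sym2.eq_iff.mp heq with ⟨h1, h2⟩ | ⟨h1, h2⟩
      · exact absurd h1 (Sum.inr_ne_inl)
      · exact absurd h2 (Sum.inr_ne_inl)
  · intro h; exact Or.inl ⟨a, b, h, rfl⟩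

lemma keyG_LR {m n : ℕ} {M : Fin m → Fin n → Fin 3} (a : Fin m) (b : Fin n) :
    (s(Sum.inl a, Sum.inr b) : Sym2 (Fin m ⊕ Fin n)) ∈ EGof m n M ↔ M a b = 1 := by
  rw [mem_EGof]
  constructor
  · rintro (⟨x, y, hxy, heq⟩ | ⟨x, y, hxy, heq⟩)
    · rcases Sym2.eq_iff.mp heq with ⟨h1, h2⟩ | ⟨h1, h2⟩
      · exact absurd h1 (Sum.inl_ne_inr)
      · exact absurd h1 (Sum.inl_ne_inr)
    · rcases Sym2.eq_iff.mp heq with ⟨h1, h2⟩ | ⟨h1, h2⟩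
      · rw [Sum.inl.inj h1, Sum.inr.inj h2]; exact hxy
      · exact absurd h1 (Sum.inl_ne_inr)
  · intro h; exact Or.inr ⟨a, b, h, rfl⟩

lemma keyG_LL {m n : ℕ} {M : Fin m → Fin n → Fin 3} (a b : Fin m) :
    (s(Sum.inl a, Sum.inl b) : Sym2 (Fin m ⊕ Fin n)) ∉ EGof m n M := by
  intro h
  rw [mem_EGof] at h
  rcases h with ⟨x, y, hxy, heq⟩ | ⟨x, y, hxy, heq⟩ <;>
    rcases Sym2.eq_iff.mp heq with ⟨h1, h2⟩ | ⟨h1, h2⟩ <;>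
    first
      | exact absurd h1 (Sum.inl_ne_inr)
      | exact absurd h2 (Sum.inl_ne_inr)

lemma ERof_nondiag {m n : ℕ} {M : Fin m → Fin n → Fin 3} :
    ∀ e ∈ ERof m n M, ¬ e.IsDiag := by
  intro e he
  rcases mem_ERof.mp he with ⟨x, y, hxy, rfl⟩ | ⟨x, y, _, rfl⟩
  · rw [Sym2.mk_isDiag_iff]
    exact fun h => hxy (Sum.inl.inj h)
  · rw [Sym2.mk_isDiag_iff]
    exact Sum.inl_ne_inr

lemma EGof_nondiag {m n : ℕ} {M : Fin m → Fin n → Fin 3} :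
    ∀ e ∈ EGof m n M, ¬ e.IsDiag := by
  intro e he
  rcases mem_EGof.mp he with ⟨x, y, hxy, rfl⟩ | ⟨x, y, _, rfl⟩
  · rw [Sym2.mk_isDiag_iff]
    exact fun h => hxy (Sum.inr.inj h)
  · rw [Sym2.mk_isDiag_iff]
    exact Sum.inl_ne_inr

lemma fwd (m n : ℕ) (rR rG : Fin m → ℕ) (sR sG : Fin n → ℕ)
    (M : Fin m → Fin n → Fin 3)
    (hM0 : ∀ i, (Finset.univ.filter (fun j => M i j = 0)).card = rR i)
    (hM1 : ∀ i, (Finset.univ.filter (fun j => M i j = 1)).card = rG i)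
    (hM0c : ∀ j, (Finset.univ.filter (fun i => M i j = 0)).card = sR j)
    (hM1c : ∀ j, (Finset.univ.filter (fun i => M i j = 1)).card = sG j) :
    (∃ ER EG : Finset (Sym2 (Fin m ⊕ Fin n)),
      (∀ e ∈ ER, ¬ e.IsDiag) ∧ (∀ e ∈ EG, ¬ e.IsDiag) ∧ Disjoint ER EG ∧
      (∀ i : Fin m, edgeDeg ER (Sum.inl i) = rR i + (m - 1)) ∧
      (∀ i : Fin m, edgeDeg EG (Sum.inl i) = rG i) ∧
      (∀ j : Fin n, edgeDeg ER (Sum.inr j) = sR j) ∧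
      (∀ j : Fin n, edgeDeg EG (Sum.inr j) = sG j + (n - 1))) := by
  classical
  refine ⟨ERof m n M, EGof m n M, ERof_nondiag, EGof_nondiag, ?_, ?_, ?_, ?_, ?_⟩
  · rw [Finset.disjoint_left]
    intro e heR heG
    rcases mem_ERof.mp heR with ⟨x, y, hxy, rfl⟩ | ⟨x, y, hxy, rfl⟩
    · exact keyG_LL x y heG
    · rw [keyG_LR] at heG
      rw [hxy] at heG
      exact absurd heG (by decide)
  · intro i
    rw [edgeDeg, edgeDeg_eq' _ ERof_nondiag (Sum.inl i), filter_sum_card]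
    have h1 : (univ.filter (fun a : Fin m =>
        (s(Sum.inl i, Sum.inl a) : Sym2 (Fin m ⊕ Fin n)) ∈ ERof m n M)) = univ.erase i := by
      ext a
      simp only [mem_filter, mem_univ, true_and, Finset.mem_erase, and_true, keyR_LL]
      exact ⟨fun h => Ne.symm h, fun h => Ne.symm h⟩
    have h2 : (univ.filter (fun b : Fin n =>
        (s(Sum.inl i, Sum.inr b) : Sym2 (Fin m ⊕ Fin n)) ∈ ERof m n M)).card = rR i := by
      rw [Finset.filter_congr (fun b _ => keyR_LR i b)]
      exact hM0 i
    rw [h1, h2, Finset.card_erase_of_mem (mem_univ i), card_univ, Fintype.card_fin, Nat.add_comm]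
  · intro i
    rw [edgeDeg, edgeDeg_eq' _ EGof_nondiag (Sum.inl i), filter_sum_card]
    have h1 : (univ.filter (fun a : Fin m =>
        (s(Sum.inl i, Sum.inl a) : Sym2 (Fin m ⊕ Fin n)) ∈ EGof m n M)) = ∅ := by
      ext a; simp [keyG_LL]
    have h2 : (univ.filter (fun b : Fin n =>
        (s(Sum.inl i, Sum.inr b) : Sym2 (Fin m ⊕ Fin n)) ∈ EGof m n M)).card = rG i := by
      rw [Finset.filter_congr (fun b _ => keyG_LR i b)]
      exact hM1 i
    rw [h1, h2]
    simp
  · intro j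
    rw [edgeDeg, edgeDeg_eq' _ ERof_nondiag (Sum.inr j), filter_sum_card]
    have h1 : (univ.filter (fun a : Fin m =>
        (s(Sum.inr j, Sum.inl a) : Sym2 (Fin m ⊕ Fin n)) ∈ ERof m n M)).card = sR j := by
      rw [Finset.filter_congr (fun a _ => by rw [Sym2.eq_swap, keyR_LR])]
      exact hM0c j
    have h2 : (univ.filter (fun b : Fin n =>
        (s(Sum.inr j, Sum.inr b) : Sym2 (Fin m ⊕ Fin n)) ∈ ERof m n M)) = ∅ := by
      ext b; simp [keyR_RR]
    rw [h1, h2]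
    simp
  · intro j
    rw [edgeDeg, edgeDeg_eq' _ EGof_nondiag (Sum.inr j), filter_sum_card]
    have h1 : (univ.filter (fun a : Fin m =>
        (s(Sum.inr j, Sum.inl a) : Sym2 (Fin m ⊕ Fin n)) ∈ EGof m n M)).card = sG j := by
      rw [Finset.filter_congr (fun a _ => by rw [Sym2.eq_swap, keyG_LR])]
      exact hM1c j
    have h2 : (univ.filter (fun b : Fin n =>
        (s(Sum.inr j, Sum.inr b) : Sym2 (Fin m ⊕ Fin n)) ∈ EGof m n M)) = univ.erase j := by
      ext b
      simp only [mem_filter, mem_univ, true_and, Finset.mem_erase, and_true, keyG_RR]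
      exact ⟨fun h => Ne.symm h, fun h => Ne.symm h⟩
    rw [h1, h2, Finset.card_erase_of_mem (mem_univ j), card_univ, Fintype.card_fin]

lemma bwd (m n : ℕ) (rR rG : Fin m → ℕ) (sR sG : Fin n → ℕ)
    (hsumR : ∑ i, rR i = ∑ j, sR j) (hsumG : ∑ i, rG i = ∑ j, sG j)
    (ER EG : Finset (Sym2 (Fin m ⊕ Fin n)))
    (hERd : ∀ e ∈ ER, ¬ e.IsDiag) (hEGd : ∀ e ∈ EG, ¬ e.IsDiag)
    (hdisj : Disjoint ER EG)
    (hRL : ∀ i : Fin m, edgeDeg ER (Sum.inl i) = rR i + (m - 1))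
    (hGL : ∀ i : Fin m, edgeDeg EG (Sum.inl i) = rG i)
    (hRR : ∀ j : Fin n, edgeDeg ER (Sum.inr j) = sR j)
    (hGR : ∀ j : Fin n, edgeDeg EG (Sum.inr j) = sG j + (n - 1)) :
    (∃ M : Fin m → Fin n → Fin 3,
      (∀ i, (Finset.univ.filter (fun j => M i j = 0)).card = rR i) ∧
      (∀ i, (Finset.univ.filter (fun j => M i j = 1)).card = rG i) ∧
      (∀ j, (Finset.univ.filter (fun i => M i j = 0)).card = sR j) ∧
      (∀ j, (Finset.univ.filter (fun i => M i j = 1)).card = sG j)) := by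
  classical
  -- cross-edge counts
  let cR : Fin m → ℕ := fun i => (univ.filter (fun j : Fin n =>
    (s(Sum.inl i, Sum.inr j) : Sym2 (Fin m ⊕ Fin n)) ∈ ER)).card
  let dR : Fin n → ℕ := fun j => (univ.filter (fun i : Fin m =>
    (s(Sum.inl i, Sum.inr j) : Sym2 (Fin m ⊕ Fin n)) ∈ ER)).card
  let cG : Fin m → ℕ := fun i => (univ.filter (fun j : Fin n =>
    (s(Sum.inl i, Sum.inr j) : Sym2 (Fin m ⊕ Fin n)) ∈ EG)).card
  let dG : Fin n → ℕ := fun j => (univ.filter (fun i : Fin m =>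
    (s(Sum.inl i, Sum.inr j) : Sym2 (Fin m ⊕ Fin n)) ∈ EG)).card
  -- generic same-side degree bound
  have same_bound : ∀ (E : Finset (Sym2 (Fin m ⊕ Fin n))), (∀ e ∈ E, ¬ e.IsDiag) →
      ∀ i : Fin m, (univ.filter (fun a : Fin m =>
        (s(Sum.inl i, Sum.inl a) : Sym2 (Fin m ⊕ Fin n)) ∈ E)).card ≤ m - 1 := by
    intro E hE i
    have hsub : (univ.filter (fun a : Fin m =>
        (s(Sum.inl i, Sum.inl a) : Sym2 (Fin m ⊕ Fin n)) ∈ E)) ⊆ univ.erase i := by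
      intro x hx
      simp only [mem_filter, mem_univ, true_and] at hx
      refine Finset.mem_erase.mpr ⟨?_, mem_univ x⟩
      rintro rfl
      exact hE _ hx (Sym2.mk_isDiag_iff.mpr rfl)
    calc (univ.filter (fun a : Fin m =>
          (s(Sum.inl i, Sum.inl a) : Sym2 (Fin m ⊕ Fin n)) ∈ E)).card
        ≤ (univ.erase i).card := Finset.card_le_card hsub
      _ = m - 1 := by rw [Finset.card_erase_of_mem (mem_univ i), card_univ, Fintype.card_fin]
  have same_bound' : ∀ (E : Finset (Sym2 (Fin m ⊕ Fin n))), (∀ e ∈ E, ¬ e.IsDiag) →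
      ∀ j : Fin n, (univ.filter (fun b : Fin n =>
        (s(Sum.inr j, Sum.inr b) : Sym2 (Fin m ⊕ Fin n)) ∈ E)).card ≤ n - 1 := by
    intro E hE j
    have hsub : (univ.filter (fun b : Fin n =>
        (s(Sum.inr j, Sum.inr b) : Sym2 (Fin m ⊕ Fin n)) ∈ E)) ⊆ univ.erase j := by
      intro x hx
      simp only [mem_filter, mem_univ, true_and] at hx
      refine Finset.mem_erase.mpr ⟨?_, mem_univ x⟩
      rintro rfl
      exact hE _ hx (Sym2.mk_isDiag_iff.mpr rfl)
    calc (univ.filter (fun b : Fin n =>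
          (s(Sum.inr j, Sum.inr b) : Sym2 (Fin m ⊕ Fin n)) ∈ E)).card
        ≤ (univ.erase j).card := Finset.card_le_card hsub
      _ = n - 1 := by rw [Finset.card_erase_of_mem (mem_univ j), card_univ, Fintype.card_fin]
  -- degree splits
  have splitRL : ∀ i : Fin m,
      (univ.filter (fun a : Fin m =>
        (s(Sum.inl i, Sum.inl a) : Sym2 (Fin m ⊕ Fin n)) ∈ ER)).card + cR i = rR i + (m - 1) := by
    intro i
    rw [← hRL i, edgeDeg, edgeDeg_eq' ER hERd (Sum.inl i), filter_sum_card]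
  have splitRR : ∀ j : Fin n,
      sR j = dR j + (univ.filter (fun b : Fin n =>
        (s(Sum.inr j, Sum.inr b) : Sym2 (Fin m ⊕ Fin n)) ∈ ER)).card := by
    intro j
    rw [← hRR j, edgeDeg, edgeDeg_eq' ER hERd (Sum.inr j), filter_sum_card]
    congr 1
    exact congrArg Finset.card (Finset.filter_congr (fun a _ => by rw [Sym2.eq_swap]))
  have splitGL : ∀ i : Fin m,
      (univ.filter (fun a : Fin m =>
        (s(Sum.inl i, Sum.inl a) : Sym2 (Fin m ⊕ Fin n)) ∈ EG)).card + cG i = rG i := by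
    intro i
    rw [← hGL i, edgeDeg, edgeDeg_eq' EG hEGd (Sum.inl i), filter_sum_card]
  have splitGR : ∀ j : Fin n,
      dG j + (univ.filter (fun b : Fin n =>
        (s(Sum.inr j, Sum.inr b) : Sym2 (Fin m ⊕ Fin n)) ∈ EG)).card = sG j + (n - 1) := by
    intro j
    rw [← hGR j, edgeDeg, edgeDeg_eq' EG hEGd (Sum.inr j), filter_sum_card]
    congr 1
    exact congrArg Finset.card (Finset.filter_congr (fun a _ => by rw [Sym2.eq_swap]))
  -- double counting cross edges
  have hcross : ∀ (E : Finset (Sym2 (Fin m ⊕ Fin n))),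
      ∑ i : Fin m, (univ.filter (fun j : Fin n =>
        (s(Sum.inl i, Sum.inr j) : Sym2 (Fin m ⊕ Fin n)) ∈ E)).card
      = ∑ j : Fin n, (univ.filter (fun i : Fin m =>
        (s(Sum.inl i, Sum.inr j) : Sym2 (Fin m ⊕ Fin n)) ∈ E)).card := by
    intro E
    simp only [Finset.card_filter]
    exact Finset.sum_comm
  -- pointwise inequalities
  have hler : ∀ i ∈ (univ : Finset (Fin m)), rR i ≤ cR i := by
    intro i _
    have h1 := splitRL i
    have h2 := same_bound ER hERd i
    omega
  have hled : ∀ j ∈ (univ : Finset (Fin n)), dR j ≤ sR j := by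
    intro j _
    have := splitRR j
    omega
  have hsums : ∑ i, rR i ≤ ∑ i, cR i := Finset.sum_le_sum hler
  have hsums2 : ∑ j, dR j ≤ ∑ j, sR j := Finset.sum_le_sum hled
  have hcrR : ∑ i, cR i = ∑ j, dR j := hcross ER
  have heqR : ∑ i, rR i = ∑ i, cR i := by omega
  have heqR2 : ∑ j, dR j = ∑ j, sR j := by omega
  have hcReq : ∀ i, cR i = rR i := by
    intro i
    exact ((Finset.sum_eq_sum_iff_of_le hler).mp heqR i (mem_univ i)).symm
  have hdReq : ∀ j, dR j = sR j := by
    intro j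
    exact (Finset.sum_eq_sum_iff_of_le hled).mp heqR2 j (mem_univ j)
  -- green
  have hleg : ∀ i ∈ (univ : Finset (Fin m)), cG i ≤ rG i := by
    intro i _
    have := splitGL i
    omega
  have hlegd : ∀ j ∈ (univ : Finset (Fin n)), sG j ≤ dG j := by
    intro j _
    have h1 := splitGR j
    have h2 := same_bound' EG hEGd j
    omega
  have hsumg : ∑ i, cG i ≤ ∑ i, rG i := Finset.sum_le_sum hleg
  have hsumg2 : ∑ j, sG j ≤ ∑ j, dG j := Finset.sum_le_sum hlegd
  have hcrG : ∑ i, cG i = ∑ j, dG j := hcross EG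
  have heqG : ∑ i, cG i = ∑ i, rG i := by omega
  have heqG2 : ∑ j, sG j = ∑ j, dG j := by omega
  have hcGeq : ∀ i, cG i = rG i := by
    intro i
    exact (Finset.sum_eq_sum_iff_of_le hleg).mp heqG i (mem_univ i)
  have hdGeq : ∀ j, dG j = sG j := by
    intro j
    exact ((Finset.sum_eq_sum_iff_of_le hlegd).mp heqG2 j (mem_univ j)).symm
  -- construct the matrix
  refine ⟨fun i j => if (s(Sum.inl i, Sum.inr j) : Sym2 (Fin m ⊕ Fin n)) ∈ ER then 0
    else if (s(Sum.inl i, Sum.inr j) : Sym2 (Fin m ⊕ Fin n)) ∈ EG then 1 else 2, ?_, ?_, ?_, ?_⟩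
  · intro i
    rw [← hcReq i]
    apply congrArg
    apply Finset.filter_congr
    intro j _
    constructor
    · intro h
      by_contra hmem
      simp only [if_neg hmem] at h
      split_ifs at h <;> exact absurd h (by decide)
    · intro h
      simp [if_pos h]
  · intro i
    rw [← hcGeq i]
    apply congrArg
    apply Finset.filter_congr
    intro j _
    constructor
    · intro h
      by_cases h1 : (s(Sum.inl i, Sum.inr j) : Sym2 (Fin m ⊕ Fin n)) ∈ ER
      · simp only [if_pos h1] at h
        exact absurd h (by decide)
      · by_contra h2
        simp only [if_neg h1, if_neg h2] at h
        exact absurd h (by decide)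
    · intro h
      have hnot : (s(Sum.inl i, Sum.inr j) : Sym2 (Fin m ⊕ Fin n)) ∉ ER :=
        fun hmem => (Finset.disjoint_left.mp hdisj hmem) h
      simp [if_neg hnot, if_pos h]
  · intro j
    rw [← hdReq j]
    apply congrArg
    apply Finset.filter_congr
    intro i _
    constructor
    · intro h
      by_contra hmem
      simp only [if_neg hmem] at h
      split_ifs at h <;> exact absurd h (by decide)
    · intro h
      simp [if_pos h]
  · intro j
    rw [← hdGeq j]
    apply congrArg
    apply Finset.filter_congr
    intro i _
    constructor
    · intro h
      by_cases h1 : (s(Sum.inl i, Sum.inr j) : Sym2 (Fin m ⊕ Fin n)) ∈ ER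
      · simp only [if_pos h1] at h
        exact absurd h (by decide)
      · by_contra h2
        simp only [if_neg h1, if_neg h2] at h
        exact absurd h (by decide)
    · intro h
      have hnot : (s(Sum.inl i, Sum.inr j) : Sym2 (Fin m ⊕ Fin n)) ∉ ER :=
        fun hmem => (Finset.disjoint_left.mp hdisj hmem) h
      simp [if_neg hnot, if_pos h]

end Helpers

/-- A 3-color tomography instance `(r^R, r^G, s^R, s^G)` (with
`r^R_i + r^G_i ≤ n`, `s^R_j + s^G_j ≤ m`, `∑ r^R = ∑ s^R`, `∑ r^G = ∑ s^G`) has a solution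
`M ∈ {R,G,Y}^{m×n}` if and only if on the vertex set of `m` row-vertices and `n`
column-vertices there exist two disjoint edge sets `E^R, E^G` (sets of unordered pairs of
distinct vertices) with red/green degrees `r^R_i + (m−1)` and `r^G_i` at row-vertex `u_i`,
and `s^R_j` and `s^G_j + (n−1)` at column-vertex `w_j`.
Colors are encoded in `Fin 3` with `0 = R`, `1 = G`, `2 = Y`; row-vertices are `Sum.inl i`
and column-vertices are `Sum.inr j`. -/
theorem stmt_14 (m n : ℕ) (rR rG : Fin m → ℕ) (sR sG : Fin n → ℕ)
    (hrow : ∀ i, rR i + rG i ≤ n) (hcol : ∀ j, sR j + sG j ≤ m)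
    (hsumR : ∑ i, rR i = ∑ j, sR j) (hsumG : ∑ i, rG i = ∑ j, sG j) :
    (∃ M : Fin m → Fin n → Fin 3,
      (∀ i, (Finset.univ.filter (fun j => M i j = 0)).card = rR i) ∧
      (∀ i, (Finset.univ.filter (fun j => M i j = 1)).card = rG i) ∧
      (∀ j, (Finset.univ.filter (fun i => M i j = 0)).card = sR j) ∧
      (∀ j, (Finset.univ.filter (fun i => M i j = 1)).card = sG j)) ↔
    (∃ ER EG : Finset (Sym2 (Fin m ⊕ Fin n)),
      (∀ e ∈ ER, ¬ e.IsDiag) ∧ (∀ e ∈ EG, ¬ e.IsDiag) ∧ Disjoint ER EG ∧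
      (∀ i : Fin m, edgeDeg ER (Sum.inl i) = rR i + (m - 1)) ∧
      (∀ i : Fin m, edgeDeg EG (Sum.inl i) = rG i) ∧
      (∀ j : Fin n, edgeDeg ER (Sum.inr j) = sR j) ∧
      (∀ j : Fin n, edgeDeg EG (Sum.inr j) = sG j + (n - 1))) := by
  constructor
  · rintro ⟨M, hM0, hM1, hM0c, hM1c⟩
    exact fwd m n rR rG sR sG M hM0 hM1 hM0c hM1c
  · rintro ⟨ER, EG, hERd, hEGd, hdisj, hRL, hGL, hRR, hGR⟩
    exact bwd m n rR rG sR sG hsumR hsumG ER EG hERd hEGd hdisj hRL hGL hRR hGR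
end

section
/- Let r^R, r^G ∈ ℕ^m and s^R, s^G ∈ ℕ^n satisfy ∑_i r^R_i = ∑_j s^R_j and ∑_i r^G_i = ∑_j s^G_j, and let V consist of m row-vertices u_1,…,u_m and n column-vertices w_1,…,w_n. Suppose E^R, E^G are disjoint sets of unordered pairs of distinct vertices of V with deg_{E^R}(u_i) = r^R_i + (m−1), deg_{E^G}(u_i) = r^G_i, deg_{E^R}(w_j) = s^R_j, deg_{E^G}(w_j) = s^G_j + (n−1) for all i, j. Then {u_i, u_{i'}} ∈ E^R for every pair i ≠ i', {w_j, w_{j'}} ∈ E^G for every pair j ≠ j', E^R contains no pair of two column-vertices, and E^G contains no pair of two row-vertices. -/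
set_option linter.unusedSectionVars false
set_option linter.unusedVariables false

section Aux

open Finset

variable {α β : Type*} [Fintype α] [Fintype β] [DecidableEq α] [DecidableEq β]

/-- number of left endpoints of `e`. -/
def fL (e : Sym2 (α ⊕ β)) : ℕ :=
  (univ.filter (fun i : α => (Sum.inl i : α ⊕ β) ∈ e)).card

def fR (e : Sym2 (α ⊕ β)) : ℕ :=
  (univ.filter (fun j : β => (Sum.inr j : α ⊕ β) ∈ e)).card

lemma fL_inl_inl (a b : α) (h : a ≠ b) :
    fL (s((Sum.inl a : α ⊕ β), Sum.inl b)) = 2 := by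
  unfold fL
  have : (univ.filter (fun i : α => (Sum.inl i : α ⊕ β) ∈ s((Sum.inl a : α ⊕ β), Sum.inl b)))
      = {a, b} := by
    ext i; simp [Sym2.mem_iff]
  rw [this, card_insert_of_notMem (by simpa using h), card_singleton]

lemma fR_inl_inl (a b : α) :
    fR (s((Sum.inl a : α ⊕ β), Sum.inl b)) = 0 := by
  unfold fR
  simp [Sym2.mem_iff]

lemma fL_inl_inr (a : α) (b : β) :
    fL (s((Sum.inl a : α ⊕ β), Sum.inr b)) = 1 := by
  unfold fL
  have : (univ.filter (fun i : α => (Sum.inl i : α ⊕ β) ∈ s((Sum.inl a : α ⊕ β), Sum.inr b)))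
      = {a} := by ext i; simp [Sym2.mem_iff]
  rw [this, card_singleton]

lemma fR_inl_inr (a : α) (b : β) :
    fR (s((Sum.inl a : α ⊕ β), Sum.inr b)) = 1 := by
  unfold fR
  have : (univ.filter (fun j : β => (Sum.inr j : α ⊕ β) ∈ s((Sum.inl a : α ⊕ β), Sum.inr b)))
      = {b} := by ext j; simp [Sym2.mem_iff]
  rw [this, card_singleton]

lemma fL_inr_inr (a b : β) :
    fL (s((Sum.inr a : α ⊕ β), Sum.inr b)) = 0 := by
  unfold fL
  simp [Sym2.mem_iff]

lemma fR_inr_inr (a b : β) (h : a ≠ b) :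
    fR (s((Sum.inr a : α ⊕ β), Sum.inr b)) = 2 := by
  unfold fR
  have : (univ.filter (fun j : β => (Sum.inr j : α ⊕ β) ∈ s((Sum.inr a : α ⊕ β), Sum.inr b)))
      = {a, b} := by ext j; simp [Sym2.mem_iff]
  rw [this, card_insert_of_notMem (by simpa using h), card_singleton]

lemma fL_add_fR (e : Sym2 (α ⊕ β)) (h : ¬ e.IsDiag) : fL e + fR e = 2 := by
  induction e using Sym2.ind with
  | _ x y =>
    rw [Sym2.mk_isDiag_iff] at h
    rcases x with a | a <;> rcases y with b | b
    · rw [fL_inl_inl a b (by simpa using h), fR_inl_inl]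
    · rw [fL_inl_inr, fR_inl_inr]
    · rw [Sym2.eq_swap, fL_inl_inr, fR_inl_inr]
    · rw [fL_inr_inr a b, fR_inr_inr a b (by simpa using h)]

lemma sum_edgeDeg_left (E : Finset (Sym2 (α ⊕ β))) :
    ∑ i : α, edgeDeg E (Sum.inl i) = ∑ e ∈ E, fL e := by
  unfold edgeDeg fL
  simp only [card_filter]
  exact Finset.sum_comm

lemma sum_edgeDeg_right (E : Finset (Sym2 (α ⊕ β))) :
    ∑ j : β, edgeDeg E (Sum.inr j) = ∑ e ∈ E, fR e := by
  unfold edgeDeg fR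
  simp only [card_filter]
  exact Finset.sum_comm

/-- all non-diagonal pairs of left vertices -/
def Qset (α β : Type*) [Fintype α] [DecidableEq α] [DecidableEq β] : Finset (Sym2 (α ⊕ β)) :=
  ((univ : Finset (Sym2 α)).filter (fun e => ¬ e.IsDiag)).image (Sym2.map Sum.inl)

lemma mem_Qset (i i' : α) (h : i ≠ i') :
    s((Sum.inl i : α ⊕ β), Sum.inl i') ∈ Qset α β := by
  refine mem_image.2 ⟨s(i, i'), ?_, rfl⟩
  simp [Sym2.mk_isDiag_iff, h]

lemma Qset_fL {e : Sym2 (α ⊕ β)} (he : e ∈ Qset α β) :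
    fL e = 2 ∧ fR e = 0 ∧ ¬ e.IsDiag := by
  obtain ⟨e', he', rfl⟩ := mem_image.1 he
  simp only [mem_filter] at he'
  induction e' using Sym2.ind with
  | _ x y =>
    rw [Sym2.mk_isDiag_iff] at he'
    have hxy : x ≠ y := he'.2
    refine ⟨fL_inl_inl x y hxy, fR_inl_inl x y, ?_⟩
    simp [Sym2.mk_isDiag_iff, hxy]

lemma mem_Qset_of_fL {e : Sym2 (α ⊕ β)} (hnd : ¬ e.IsDiag) (h : fL e = 2) :
    e ∈ Qset α β := by
  induction e using Sym2.ind with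
  | _ x y =>
    rw [Sym2.mk_isDiag_iff] at hnd
    rcases x with a | a <;> rcases y with b | b
    · exact mem_Qset a b (by simpa using hnd)
    · rw [fL_inl_inr] at h; omega
    · rw [Sym2.eq_swap, fL_inl_inr] at h; exact absurd h (by norm_num)
    · rw [fL_inr_inr] at h; exact absurd h (by norm_num)

lemma edgeDeg_Qset (i : α) :
    edgeDeg (Qset α β) (Sum.inl i) = Fintype.card α - 1 := by
  unfold edgeDeg
  have : Fintype.card α - 1 = ((univ : Finset α).erase i).card := by
    rw [card_erase_of_mem (mem_univ i), Finset.card_univ]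
  rw [this]
  symm
  apply Finset.card_bij (fun i' _ => s((Sum.inl i : α ⊕ β), Sum.inl i'))
  · intro i' hi'
    have hne : i ≠ i' := fun h => (mem_erase.1 hi').1 h.symm
    exact mem_filter.2 ⟨mem_Qset i i' hne, by simp [Sym2.mem_iff]⟩
  · intro a ha b hb hab
    exact Sum.inl.inj (Sym2.congr_right.1 hab)
  · intro e he
    rw [mem_filter] at he
    obtain ⟨heQ, hei⟩ := he
    obtain ⟨e', he', rfl⟩ := mem_image.1 heQ
    rw [mem_filter] at he'
    induction e' using Sym2.ind with
    | _ x y =>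
      have hxy : x ≠ y := by
        have := he'.2; rwa [Sym2.mk_isDiag_iff] at this
      have : Sym2.map (Sum.inl : α → α ⊕ β) s(x, y) = s(Sum.inl x, Sum.inl y) := rfl
      rw [this] at hei ⊢
      rw [Sym2.mem_iff] at hei
      rcases hei with h | h
      · have hx : x = i := by simpa using h.symm
        subst hx
        exact ⟨y, mem_erase.2 ⟨fun hy => hxy hy.symm, mem_univ y⟩, rfl⟩
      · have hy : y = i := by simpa using h.symm
        subst hy
        exact ⟨x, mem_erase.2 ⟨hxy, mem_univ x⟩, by rw [Sym2.eq_swap]⟩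

lemma core (a : α → ℕ) (b : β → ℕ) (E : Finset (Sym2 (α ⊕ β)))
    (hnd : ∀ e ∈ E, ¬ e.IsDiag)
    (hda : ∀ i, edgeDeg E (Sum.inl i) = a i + (Fintype.card α - 1))
    (hdb : ∀ j, edgeDeg E (Sum.inr j) = b j)
    (hsum : ∑ i, a i = ∑ j, b j) :
    (∀ i i' : α, i ≠ i' → s((Sum.inl i : α ⊕ β), Sum.inl i') ∈ E) ∧
    (∀ j j' : β, s((Sum.inr j : α ⊕ β), Sum.inr j') ∉ E) := by
  classical
  set Q := Qset α β with hQdef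
  -- sum over Q
  have hQsum : ∑ e ∈ Q, fL e = 2 * Q.card := by
    rw [Finset.sum_congr rfl (fun e he => (Qset_fL he).1), Finset.sum_const, smul_eq_mul,
      mul_comm]
  have hQdeg : ∑ e ∈ Q, fL e = Fintype.card α * (Fintype.card α - 1) := by
    rw [← sum_edgeDeg_left]
    rw [Finset.sum_congr rfl (fun i _ => edgeDeg_Qset i), Finset.sum_const, smul_eq_mul,
      Finset.card_univ]
  -- total sums over E
  have hSf : ∑ e ∈ E, fL e = (∑ i, a i) + Fintype.card α * (Fintype.card α - 1) := by
    rw [← sum_edgeDeg_left, Finset.sum_congr rfl (fun i _ => hda i), Finset.sum_add_distrib,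
      Finset.sum_const, smul_eq_mul, Finset.card_univ]
  have hSg : ∑ e ∈ E, fR e = ∑ i, a i := by
    rw [← sum_edgeDeg_right, Finset.sum_congr rfl (fun j _ => hdb j), hsum]
  -- split
  have hsplitf : ∑ e ∈ E ∩ Q, fL e + ∑ e ∈ E \ Q, fL e = ∑ e ∈ E, fL e :=
    Finset.sum_inter_add_sum_sdiff E Q fL
  have hsplitg : ∑ e ∈ E ∩ Q, fR e + ∑ e ∈ E \ Q, fR e = ∑ e ∈ E, fR e :=
    Finset.sum_inter_add_sum_sdiff E Q fR
  have h1f : ∑ e ∈ E ∩ Q, fL e = 2 * (E ∩ Q).card := by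
    rw [Finset.sum_congr rfl (fun e he => (Qset_fL (Finset.mem_inter.1 he).2).1),
      Finset.sum_const, smul_eq_mul, mul_comm]
  have h1g : ∑ e ∈ E ∩ Q, fR e = 0 := by
    rw [Finset.sum_congr rfl (fun e he => (Qset_fL (Finset.mem_inter.1 he).2).2.1),
      Finset.sum_const, smul_eq_mul, mul_zero]
  have hle : ∀ e ∈ E \ Q, fL e ≤ fR e := by
    intro e he
    rw [Finset.mem_sdiff] at he
    have h2 := fL_add_fR e (hnd e he.1)
    have : fL e ≠ 2 := fun h => he.2 (mem_Qset_of_fL (hnd e he.1) h)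
    omega
  have hcard : (E ∩ Q).card ≤ Q.card := Finset.card_le_card (Finset.inter_subset_right)
  have hsumle : ∑ e ∈ E \ Q, fL e ≤ ∑ e ∈ E \ Q, fR e := Finset.sum_le_sum hle
  -- equality
  have key : (E ∩ Q).card = Q.card ∧ ∑ e ∈ E \ Q, fL e = ∑ e ∈ E \ Q, fR e := by
    constructor <;> omega
  have hQE : Q ⊆ E := by
    have : E ∩ Q = Q := Finset.eq_of_subset_of_card_le Finset.inter_subset_right
      (le_of_eq key.1.symm)
    rw [← this]; exact Finset.inter_subset_left
  have hpt : ∀ e ∈ E \ Q, fL e = fR e :=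
    (Finset.sum_eq_sum_iff_of_le hle).1 key.2
  constructor
  · intro i i' h
    exact hQE (mem_Qset i i' h)
  · intro j j' hmem
    by_cases h : j = j'
    · subst h
      exact hnd _ hmem (by simp [Sym2.mk_isDiag_iff])
    · have hnQ : s((Sum.inr j : α ⊕ β), Sum.inr j') ∉ Q := by
        intro hq
        have := (Qset_fL hq).1
        rw [fL_inr_inr] at this
        omega
      have := hpt _ (Finset.mem_sdiff.2 ⟨hmem, hnQ⟩)
      rw [fL_inr_inr, fR_inr_inr j j' h] at this
      omega

lemma edgeDeg_map {V W : Type*} [DecidableEq V] [DecidableEq W]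
    (σ : V ≃ W) (E : Finset (Sym2 V)) (v : V) :
    edgeDeg (E.map ⟨Sym2.map σ, Sym2.map.injective σ.injective⟩) (σ v) = edgeDeg E v := by
  unfold edgeDeg
  rw [Finset.filter_map, Finset.card_map]
  congr 1
  apply Finset.filter_congr
  intro e _
  simp only [Function.Embedding.coeFn_mk, Function.comp_apply, Sym2.mem_map]
  constructor
  · rintro ⟨a, ha, hav⟩
    rwa [σ.injective hav] at ha
  · intro hv; exact ⟨v, hv, rfl⟩

lemma mem_map_sym2 {V W : Type*} [DecidableEq V] [DecidableEq W]
    (σ : V ≃ W) (E : Finset (Sym2 V)) (e : Sym2 V) :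
    Sym2.map σ e ∈ E.map ⟨Sym2.map σ, Sym2.map.injective σ.injective⟩ ↔ e ∈ E :=
  Finset.mem_map' _


end Aux

/-- If disjoint edge sets `E^R, E^G` on the vertex set of `m` row-vertices
`u_i = Sum.inl i` and `n` column-vertices `w_j = Sum.inr j` realize the degrees
`deg_{E^R}(u_i) = r^R_i + (m−1)`, `deg_{E^G}(u_i) = r^G_i`, `deg_{E^R}(w_j) = s^R_j`,
`deg_{E^G}(w_j) = s^G_j + (n−1)`, where `∑ r^R = ∑ s^R` and `∑ r^G = ∑ s^G`, then `E^R`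
contains all pairs of distinct row-vertices and no pair of column-vertices, and `E^G`
contains all pairs of distinct column-vertices and no pair of row-vertices. -/
theorem stmt_15 (m n : ℕ) (rR rG : Fin m → ℕ) (sR sG : Fin n → ℕ)
    (hsumR : ∑ i, rR i = ∑ j, sR j) (hsumG : ∑ i, rG i = ∑ j, sG j)
    (ER EG : Finset (Sym2 (Fin m ⊕ Fin n)))
    (hERnd : ∀ e ∈ ER, ¬ e.IsDiag) (hEGnd : ∀ e ∈ EG, ¬ e.IsDiag)
    (hdisj : Disjoint ER EG)
    (hdR : ∀ i : Fin m, edgeDeg ER (Sum.inl i) = rR i + (m - 1))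
    (hdG : ∀ i : Fin m, edgeDeg EG (Sum.inl i) = rG i)
    (hdR' : ∀ j : Fin n, edgeDeg ER (Sum.inr j) = sR j)
    (hdG' : ∀ j : Fin n, edgeDeg EG (Sum.inr j) = sG j + (n - 1)) :
    (∀ i i' : Fin m, i ≠ i' →
      s((Sum.inl i : Fin m ⊕ Fin n), Sum.inl i') ∈ ER) ∧
    (∀ j j' : Fin n, j ≠ j' →
      s((Sum.inr j : Fin m ⊕ Fin n), Sum.inr j') ∈ EG) ∧
    (∀ j j' : Fin n, s((Sum.inr j : Fin m ⊕ Fin n), Sum.inr j') ∉ ER) ∧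
    (∀ i i' : Fin m, s((Sum.inl i : Fin m ⊕ Fin n), Sum.inl i') ∉ EG) := by
  classical
  obtain ⟨hR1, hR2⟩ := core rR sR ER hERnd
    (fun i => by rw [hdR i, Fintype.card_fin]) hdR' hsumR
  set σ := Equiv.sumComm (Fin m) (Fin n) with hσ
  set EG' : Finset (Sym2 (Fin n ⊕ Fin m)) :=
    EG.map ⟨Sym2.map σ, Sym2.map.injective σ.injective⟩ with hEG'
  have hEGnd' : ∀ e ∈ EG', ¬ e.IsDiag := by
    intro e he
    obtain ⟨e', he', rfl⟩ := Finset.mem_map.1 he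
    simp only [Function.Embedding.coeFn_mk]
    rw [Sym2.isDiag_map σ.injective]
    exact hEGnd e' he'
  have hda' : ∀ j : Fin n, edgeDeg EG' (Sum.inl j) = sG j + (Fintype.card (Fin n) - 1) := by
    intro j
    have := edgeDeg_map σ EG (Sum.inr j)
    rw [hdG' j] at this
    rw [Fintype.card_fin]
    exact this
  have hdb' : ∀ i : Fin m, edgeDeg EG' (Sum.inr i) = rG i := by
    intro i
    have := edgeDeg_map σ EG (Sum.inl i)
    rw [hdG i] at this
    exact this
  obtain ⟨hG1, hG2⟩ := core sG rG EG' hEGnd' hda' hdb' hsumG.symm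
  refine ⟨hR1, ?_, hR2, ?_⟩
  · intro j j' h
    have := hG1 j j' h
    rwa [show s((Sum.inl j : Fin n ⊕ Fin m), Sum.inl j')
        = Sym2.map σ s((Sum.inr j : Fin m ⊕ Fin n), Sum.inr j') from rfl,
      mem_map_sym2] at this
  · intro i i'
    have := hG2 i i'
    rwa [show s((Sum.inr i : Fin n ⊕ Fin m), Sum.inr i')
        = Sym2.map σ s((Sum.inl i : Fin m ⊕ Fin n), Sum.inl i') from rfl,
      mem_map_sym2] at this
end
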